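/- arXiv:0902.1582 — 5 statements merged into one kernel-verified Lean document; each statement's English description precedes it below -/
import Mathlib

section
/- For n ≥ 1, the function F(ρ) := (2/n)·ρ^{2/n}·∫₁^ρ (1 - 1/r)·r^{-2/n} dr on (0,∞) is twice differentiable with F''(ρ) = (2/n)·ρ^{2/n - 2}; in particular F is strictly convex on (0,∞) and attains its unique minimum (equal to 0) at ρ = 1. -/
open Real intervalIntegral

noncomputable def F (n : ℕ) (ρ : ℝ) : ℝ :=
  (2/(n : ℝ)) * ρ ^ ((2 : ℝ)/n) * ∫ r in (1 : ℝ)..ρ, (1 - 1/r) * r ^ (-(2 : ℝ)/n)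

noncomputable def Fd (n : ℕ) (ρ : ℝ) : ℝ :=
  if n = 2 then Real.log ρ
  else (2/(n : ℝ)) * ((1 - ρ ^ ((2 : ℝ)/n - 1)) / (1 - 2/(n : ℝ)))

lemma integrand_integrable (a : ℝ) {x y : ℝ} (hx : 0 < x) (hy : 0 < y) :
    IntervalIntegrable (fun r : ℝ => (1 - 1/r) * r ^ (-a)) MeasureTheory.volume x y := by
  apply ContinuousOn.intervalIntegrable
  have hs : Set.uIcc x y ⊆ Set.Ioi 0 :=
    fun r hr => (lt_min hx hy).trans_le hr.1
  exact ((continuousOn_const.sub (continuousOn_const.div continuousOn_id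
      fun r hr => ne_of_gt (hs hr))).mul
    (ContinuousOn.rpow_const continuousOn_id fun r hr => Or.inl (ne_of_gt (hs hr))))

lemma integral_eval {a : ℝ} (ha : 0 < a) (ha1 : a ≠ 1) {ρ : ℝ} (hρ : 0 < ρ) :
    ∫ r in (1:ℝ)..ρ, (1 - 1/r) * r ^ (-a)
      = (ρ^(1-a) - 1)/(1-a) + (ρ^(-a) - 1)/a := by
  have ha' : (1:ℝ) - a ≠ 0 := sub_ne_zero.2 (Ne.symm ha1)
  have key : ∀ x ∈ Set.uIcc (1:ℝ) ρ,
      HasDerivAt (fun x : ℝ => x^(1-a)/(1-a) + x^(-a)/a) ((1 - 1/x) * x ^ (-a)) x := by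
    intro x hx
    have hxpos : 0 < x := by
      have hs : Set.uIcc (1:ℝ) ρ ⊆ Set.Ioi 0 :=
        fun r hr => (lt_min one_pos hρ).trans_le hr.1
      exact hs hx
    have h1 : HasDerivAt (fun x : ℝ => x^(1-a)) ((1-a) * x^(1-a-1)) x :=
      Real.hasDerivAt_rpow_const (Or.inl hxpos.ne')
    have h2 : HasDerivAt (fun x : ℝ => x^(-a)) ((-a) * x^(-a-1)) x :=
      Real.hasDerivAt_rpow_const (Or.inl hxpos.ne')
    have := (h1.div_const (1-a)).add (h2.div_const a)
    refine this.congr_deriv ?_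
    symm
    have e1 : (1:ℝ)-a-1 = -a := by ring
    have e2 : x ^ (-a-1) = x ^ (-a) / x := by
      rw [show -a-1 = -a - 1 from rfl, Real.rpow_sub hxpos, Real.rpow_one]
    rw [e1, e2]
    field_simp
    ring
  rw [intervalIntegral.integral_eq_sub_of_hasDerivAt key (integrand_integrable a one_pos hρ)]
  rw [Real.one_rpow, Real.one_rpow]
  field_simp
  ring

lemma integral_eval_one {ρ : ℝ} (hρ : 0 < ρ) :
    ∫ r in (1:ℝ)..ρ, (1 - 1/r) * r ^ (-(1:ℝ)) = Real.log ρ + 1/ρ - 1 := by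
  have key : ∀ x ∈ Set.uIcc (1:ℝ) ρ,
      HasDerivAt (fun x : ℝ => Real.log x + x⁻¹) ((1 - 1/x) * x ^ (-(1:ℝ))) x := by
    intro x hx
    have hxpos : 0 < x := by
      have hs : Set.uIcc (1:ℝ) ρ ⊆ Set.Ioi 0 :=
        fun r hr => (lt_min one_pos hρ).trans_le hr.1
      exact hs hx
    have h1 : HasDerivAt Real.log x⁻¹ x := Real.hasDerivAt_log hxpos.ne'
    have h2 : HasDerivAt (fun x : ℝ => x⁻¹) (-(x^2)⁻¹) x := hasDerivAt_inv hxpos.ne'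
    refine (h1.add h2).congr_deriv ?_
    symm
    rw [Real.rpow_neg hxpos.le, Real.rpow_one]
    field_simp
    ring
  rw [intervalIntegral.integral_eq_sub_of_hasDerivAt key (integrand_integrable 1 one_pos hρ)]
  simp


lemma F_eq_two {ρ : ℝ} (hρ : 0 < ρ) : F 2 ρ = ρ * Real.log ρ + 1 - ρ := by
  unfold F
  have e1 : -(2:ℝ)/((2:ℕ):ℝ) = -1 := by norm_num
  have e2 : (2:ℝ)/((2:ℕ):ℝ) = 1 := by norm_num
  rw [e1, e2, integral_eval_one hρ, Real.rpow_one]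
  field_simp [hρ.ne']

lemma F_eq {n : ℕ} (hn : 1 ≤ n) (hn2 : n ≠ 2) {ρ : ℝ} (hρ : 0 < ρ) :
    F n ρ = (2/(n:ℝ))/(1 - 2/(n:ℝ)) * ρ + 1 - ρ ^ ((2:ℝ)/n) / (1 - 2/(n:ℝ)) := by
  set a : ℝ := 2/(n:ℝ) with ha_def
  have hnpos : (0:ℝ) < n := by exact_mod_cast hn
  have ha : 0 < a := by positivity
  have ha1 : a ≠ 1 := by
    intro h
    have : (n:ℝ) = 2 := by rw [div_eq_one_iff_eq hnpos.ne'] at h; linarith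
    exact hn2 (by exact_mod_cast this)
  have ha' : (1:ℝ) - a ≠ 0 := sub_ne_zero.2 (Ne.symm ha1)
  unfold F
  rw [show -(2:ℝ)/(n:ℝ) = -a from by rw [ha_def]; ring, integral_eval ha ha1 hρ]
  have h1 : ρ^a * ρ^(1-a) = ρ := by
    rw [← Real.rpow_add hρ]; norm_num
  have h2 : ρ^a * ρ^(-a) = 1 := by
    rw [← Real.rpow_add hρ]; norm_num
  have expand : a * ρ^a * ((ρ^(1-a)-1)/(1-a) + (ρ^(-a)-1)/a)
      = (a*(ρ^a*ρ^(1-a)) - a*ρ^a)/(1-a) + ((ρ^a*ρ^(-a)) - ρ^a) := by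
    field_simp
  rw [expand, h1, h2]
  field_simp
  ring

lemma a_facts {n : ℕ} (hn : 1 ≤ n) (hn2 : n ≠ 2) :
    0 < (2:ℝ)/(n:ℝ) ∧ (2:ℝ)/(n:ℝ) ≠ 1 ∧ (1:ℝ) - 2/(n:ℝ) ≠ 0 := by
  have hnpos : (0:ℝ) < n := by exact_mod_cast hn
  have ha : 0 < (2:ℝ)/(n:ℝ) := by positivity
  have ha1 : (2:ℝ)/(n:ℝ) ≠ 1 := by
    intro h
    have : (n:ℝ) = 2 := by rw [div_eq_one_iff_eq hnpos.ne'] at h; linarith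
    exact hn2 (by exact_mod_cast this)
  exact ⟨ha, ha1, sub_ne_zero.2 (Ne.symm ha1)⟩

lemma hasDerivAt_F {n : ℕ} (hn : 1 ≤ n) {ρ : ℝ} (hρ : 0 < ρ) :
    HasDerivAt (F n) (Fd n ρ) ρ := by
  by_cases h2 : n = 2
  · subst h2
    have hev : F 2 =ᶠ[nhds ρ] fun x => x * Real.log x + 1 - x :=
      Filter.eventuallyEq_of_mem (Ioi_mem_nhds hρ) fun x hx => F_eq_two hx
    have hd : HasDerivAt (fun x : ℝ => x * Real.log x + 1 - x) (Real.log ρ) ρ := by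
      have h := ((hasDerivAt_id ρ).mul (Real.hasDerivAt_log hρ.ne')).add_const 1
      have h' := h.sub (hasDerivAt_id ρ)
      refine h'.congr_deriv ?_
      symm
      field_simp
      simp
    have := hd.congr_of_eventuallyEq hev
    simpa [Fd] using this
  · obtain ⟨ha, ha1, ha'⟩ := a_facts hn h2
    set a : ℝ := 2/(n:ℝ)
    have hev : F n =ᶠ[nhds ρ] fun x => a/(1-a) * x + 1 - x ^ a / (1-a) :=
      Filter.eventuallyEq_of_mem (Ioi_mem_nhds hρ) fun x hx => F_eq hn h2 hx
    have hd : HasDerivAt (fun x : ℝ => a/(1-a) * x + 1 - x ^ a / (1-a))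
        (Fd n ρ) ρ := by
      have h1 : HasDerivAt (fun x : ℝ => x ^ a) (a * ρ^(a-1)) ρ :=
        Real.hasDerivAt_rpow_const (Or.inl hρ.ne')
      have h := (((hasDerivAt_id ρ).const_mul (a/(1-a))).add_const 1).sub
        (h1.div_const (1-a))
      refine h.congr_deriv ?_
      symm
      simp only [Fd, h2, if_false]
      have key : ∀ b u : ℝ, 1 - b ≠ 0 → b * ((1 - u)/(1-b)) = b/(1-b)*1 - b*u/(1-b) := by
        intro b u hb; field_simp
      exact key a (ρ^(a-1)) ha'
    exact hd.congr_of_eventuallyEq hev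

lemma hasDerivAt_Fd {n : ℕ} (hn : 1 ≤ n) {ρ : ℝ} (hρ : 0 < ρ) :
    HasDerivAt (Fd n) ((2/(n : ℝ)) * ρ ^ ((2 : ℝ)/n - 2)) ρ := by
  by_cases h2 : n = 2
  · subst h2
    have e : Fd 2 = Real.log := by funext x; simp [Fd]
    rw [e]
    convert Real.hasDerivAt_log hρ.ne' using 1
    have : (2:ℝ)/((2:ℕ):ℝ) - 2 = -1 := by norm_num
    rw [this, Real.rpow_neg hρ.le, Real.rpow_one]
    norm_num
  · obtain ⟨ha, ha1, ha'⟩ := a_facts hn h2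
    set a : ℝ := 2/(n:ℝ)
    have e : Fd n = fun x : ℝ => a * ((1 - x ^ (a-1)) / (1-a)) := by
      funext x; simp [Fd, h2]; rfl
    rw [e]
    have h1 : HasDerivAt (fun x : ℝ => x ^ (a-1)) ((a-1) * ρ^(a-1-1)) ρ :=
      Real.hasDerivAt_rpow_const (Or.inl hρ.ne')
    have h := ((h1.const_sub 1).div_const (1-a)).const_mul a
    refine h.congr_deriv ?_
    symm
    have e2 : a - 1 - 1 = a - 2 := by ring
    rw [e2]
    field_simp
    ring

lemma Fd_pos {n : ℕ} (hn : 1 ≤ n) {ρ : ℝ} (h1 : 1 < ρ) : 0 < Fd n ρ := by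
  by_cases h2 : n = 2
  · subst h2; simpa [Fd] using Real.log_pos h1
  · obtain ⟨ha, ha1, ha'⟩ := a_facts hn h2
    set a : ℝ := 2/(n:ℝ)
    simp only [Fd, h2, if_false]
    apply mul_pos ha
    rcases lt_or_gt_of_ne ha1 with h | h
    · apply div_pos _ (by linarith)
      have : ρ ^ (a-1) < 1 :=
        Real.rpow_lt_one_of_one_lt_of_neg h1 (by linarith)
      linarith
    · rw [div_pos_iff]
      right
      have : 1 < ρ ^ (a-1) :=
        (Real.one_lt_rpow_iff_of_pos (by linarith)).2 (Or.inl ⟨h1, by linarith⟩)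
      constructor <;> linarith

lemma Fd_neg {n : ℕ} (hn : 1 ≤ n) {ρ : ℝ} (hρ : 0 < ρ) (h1 : ρ < 1) : Fd n ρ < 0 := by
  by_cases h2 : n = 2
  · subst h2; simpa [Fd] using Real.log_neg hρ h1
  · obtain ⟨ha, ha1, ha'⟩ := a_facts hn h2
    set a : ℝ := 2/(n:ℝ)
    simp only [Fd, h2, if_false]
    apply mul_neg_of_pos_of_neg ha
    rcases lt_or_gt_of_ne ha1 with h | h
    · apply div_neg_of_neg_of_pos _ (by linarith)
      have : 1 < ρ ^ (a-1) :=
        (Real.one_lt_rpow_iff_of_pos hρ).2 (Or.inr ⟨h1, by linarith⟩)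
      linarith
    · rw [div_neg_iff]
      left
      have : ρ ^ (a-1) < 1 :=
        (Real.rpow_lt_one_iff_of_pos hρ).2 (Or.inr ⟨h1, by linarith⟩)
      constructor <;> linarith

theorem F_second_deriv_and_convex (n : ℕ) (hn : 1 ≤ n) :
    (∃ F' : ℝ → ℝ, ∀ ρ : ℝ, 0 < ρ →
      HasDerivAt (F n) (F' ρ) ρ ∧
      HasDerivAt F' ((2/(n : ℝ)) * ρ ^ ((2 : ℝ)/n - 2)) ρ) ∧
    StrictConvexOn ℝ (Set.Ioi (0 : ℝ)) (F n) ∧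
    F n 1 = 0 ∧
    (∀ ρ : ℝ, 0 < ρ → ρ ≠ 1 → F n 1 < F n ρ) := by
  have hderiv : ∀ x : ℝ, 0 < x → deriv (F n) x = Fd n x :=
    fun x hx => (hasDerivAt_F hn hx).deriv
  have hcont : ContinuousOn (F n) (Set.Ioi 0) :=
    fun x hx => (hasDerivAt_F hn hx).differentiableAt.continuousAt.continuousWithinAt
  have hF1 : F n 1 = 0 := by unfold F; simp
  refine ⟨⟨Fd n, fun ρ hρ => ⟨hasDerivAt_F hn hρ, hasDerivAt_Fd hn hρ⟩⟩, ?_, hF1, ?_⟩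
  · apply strictConvexOn_of_deriv2_pos (convex_Ioi 0) hcont
    intro x hx
    rw [interior_Ioi] at hx
    have e1 : deriv (F n) =ᶠ[nhds x] Fd n :=
      Filter.eventuallyEq_of_mem (Ioi_mem_nhds hx) fun y hy => hderiv y hy
    have e2 : deriv^[2] (F n) x = deriv (Fd n) x := by
      simp only [Function.iterate_succ, Function.iterate_zero, Function.comp_apply, id_eq]
      exact Filter.EventuallyEq.deriv_eq e1
    rw [e2, (hasDerivAt_Fd hn hx).deriv]
    have hnpos : (0:ℝ) < n := by exact_mod_cast hn
    have : (0:ℝ) < x := hx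
    positivity
  · intro ρ hρ hne
    rcases lt_or_gt_of_ne hne with h | h
    · have hanti : StrictAntiOn (F n) (Set.Ioc 0 1) := by
        apply strictAntiOn_of_deriv_neg (convex_Ioc 0 1)
          (hcont.mono fun y hy => hy.1)
        intro x hx
        rw [interior_Ioc] at hx
        rw [hderiv x hx.1]
        exact Fd_neg hn hx.1 hx.2
      exact hanti ⟨hρ, h.le⟩ ⟨one_pos, le_refl 1⟩ h
    · have hmono : StrictMonoOn (F n) (Set.Ici 1) := by
        apply strictMonoOn_of_deriv_pos (convex_Ici 1)
          (hcont.mono fun y hy => (lt_of_lt_of_le one_pos hy : (0:ℝ) < y))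
        intro x hx
        rw [interior_Ici] at hx
        rw [hderiv x (lt_trans one_pos hx)]
        exact Fd_pos hn hx
      exact hmono Set.self_mem_Ici (Set.mem_Ici.2 h.le) h
end

section
/- Comparison principle: Let (d,ρ) satisfy d' ≤ -(1/n)d² - (ρ - 1), ρ' = -dρ, and let (e,ζ) satisfy e' = -(1/n)e² - (ζ - 1), ζ' = -eζ, all C¹ on [0,T]. If d(0) < e(0) and 0 < ζ(0) < ρ(0), then d(t) < e(t) and 0 < ζ(t) < ρ(t) for all t ∈ [0,T]. -/
open Set intervalIntegral

/-- FTC for a continuous integrand. -/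
lemma cp_ftc {g : ℝ → ℝ} (hg : Continuous g) (t : ℝ) :
    HasDerivAt (fun u => ∫ x in (0:ℝ)..u, g x) (g t) t :=
  integral_hasDerivAt_right (hg.intervalIntegrable 0 t)
    (hg.stronglyMeasurableAtFilter _ _) hg.continuousAt

/-- Monotonicity from nonnegative derivative on an interval. -/
lemma cp_mono {f f' : ℝ → ℝ} {a b : ℝ} (hab : a ≤ b)
    (hf : ∀ t ∈ Set.Icc a b, HasDerivAt f (f' t) t)
    (hf' : ∀ t ∈ Set.Icc a b, 0 ≤ f' t) : f a ≤ f b := by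
  have hmono : MonotoneOn f (Set.Icc a b) := by
    apply monotoneOn_of_deriv_nonneg (convex_Icc a b)
    · exact fun t ht => (hf t ht).continuousAt.continuousWithinAt
    · rw [interior_Icc]
      exact fun t ht => ((hf t (Set.Ioo_subset_Icc_self ht)).differentiableAt).differentiableWithinAt
    · rw [interior_Icc]
      intro t ht
      rw [(hf t (Set.Ioo_subset_Icc_self ht)).deriv]
      exact hf' t (Set.Ioo_subset_Icc_self ht)
  exact hmono (Set.left_mem_Icc.2 hab) (Set.right_mem_Icc.2 hab) hab

/-- Constancy from zero derivative on an interval. -/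
lemma cp_const {f : ℝ → ℝ} {a b : ℝ}
    (hf : ∀ t ∈ Set.Icc a b, HasDerivAt f 0 t) :
    ∀ t ∈ Set.Icc a b, f t = f a := by
  intro t ht
  have := constant_of_has_deriv_right_zero
    (f := f) (a := a) (b := b)
    (fun s hs => (hf s hs).continuousAt.continuousWithinAt)
    (fun s hs => ((hf s (Set.Ico_subset_Icc_self hs)).hasDerivWithinAt))
  exact this t ht

theorem comparison_principle (n : ℕ) (hn : 1 ≤ n) (T : ℝ) (hT : 0 ≤ T)
    (d ρ e ζ d' : ℝ → ℝ)
    (hd : ∀ t ∈ Set.Icc 0 T, HasDerivAt d (d' t) t)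
    (hd' : ∀ t ∈ Set.Icc 0 T, d' t ≤ -(1/(n : ℝ)) * (d t)^2 - (ρ t - 1))
    (hρ : ∀ t ∈ Set.Icc 0 T, HasDerivAt ρ (-(d t) * ρ t) t)
    (he : ∀ t ∈ Set.Icc 0 T, HasDerivAt e (-(1/(n : ℝ)) * (e t)^2 - (ζ t - 1)) t)
    (hζ : ∀ t ∈ Set.Icc 0 T, HasDerivAt ζ (-(e t) * ζ t) t)
    (h0 : d 0 < e 0) (hζ0 : 0 < ζ 0) (hζρ0 : ζ 0 < ρ 0) :
    ∀ t ∈ Set.Icc 0 T, d t < e t ∧ 0 < ζ t ∧ ζ t < ρ t := by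
  classical
  -- clamp to [0,T]
  set π : ℝ → ℝ := fun t => min (max t 0) T with hπdef
  have hπcont : Continuous π := (continuous_id.max continuous_const).min continuous_const
  have hπmem : ∀ t, π t ∈ Set.Icc 0 T := by
    intro t
    exact ⟨le_min (le_max_right _ _) hT, min_le_right _ _⟩
  have hπeq : ∀ t ∈ Set.Icc 0 T, π t = t := by
    intro t ht
    simp [hπdef, max_eq_left ht.1, min_eq_left ht.2]
  -- continuous extensions
  have hdc : Continuous (d ∘ π) :=
    ContinuousOn.comp_continuous
      (fun s hs => (hd s hs).continuousAt.continuousWithinAt) hπcont hπmem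
  have hec : Continuous (e ∘ π) :=
    ContinuousOn.comp_continuous
      (fun s hs => (he s hs).continuousAt.continuousWithinAt) hπcont hπmem
  -- antiderivatives
  set A : ℝ → ℝ := fun t => ∫ s in (0:ℝ)..t, (e ∘ π) s with hAdef
  set B : ℝ → ℝ := fun t => ∫ s in (0:ℝ)..t, (d ∘ π) s with hBdef
  set C : ℝ → ℝ := fun t => ∫ s in (0:ℝ)..t, (1/(n:ℝ)) * ((d ∘ π) s + (e ∘ π) s) with hCdef
  have hA : ∀ t, HasDerivAt A ((e ∘ π) t) t := fun t => cp_ftc hec t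
  have hB : ∀ t, HasDerivAt B ((d ∘ π) t) t := fun t => cp_ftc hdc t
  have hC : ∀ t, HasDerivAt C ((1/(n:ℝ)) * ((d ∘ π) t + (e ∘ π) t)) t :=
    fun t => cp_ftc (continuous_const.mul (hdc.add hec)) t
  have hA0 : A 0 = 0 := intervalIntegral.integral_same
  have hB0 : B 0 = 0 := intervalIntegral.integral_same
  have hC0 : C 0 = 0 := intervalIntegral.integral_same
  -- ζ is positive on [0,T]
  have hζpos : ∀ t ∈ Set.Icc 0 T, 0 < ζ t := by
    have hconst : ∀ t ∈ Set.Icc 0 T, ζ t * Real.exp (A t) = ζ 0 * Real.exp (A 0) := by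
      apply cp_const
      intro t ht
      have h1 : HasDerivAt (fun s => Real.exp (A s)) (Real.exp (A t) * (e ∘ π) t) t :=
        (hA t).exp
      have h2 := (hζ t ht).mul h1
      have heq : (e ∘ π) t = e t := by simp [Function.comp, hπeq t ht]
      exact h2.congr_deriv (by rw [heq]; ring)
    intro t ht
    have h := hconst t ht
    have hE := Real.exp_pos (A t)
    have hE0 := Real.exp_pos (A 0)
    nlinarith
  -- main comparison
  have key : ∀ t ∈ Set.Icc 0 T, 0 < e t - d t ∧ 0 < ρ t - ζ t := by
    by_contra hcon
    push_neg at hcon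
    obtain ⟨t₀, ht₀, hbad⟩ := hcon
    set S := {t ∈ Set.Icc 0 T | e t - d t ≤ 0 ∨ ρ t - ζ t ≤ 0} with hSdef
    have ht₀S : t₀ ∈ S := by
      refine ⟨ht₀, ?_⟩
      rcases le_or_gt (e t₀ - d t₀) 0 with h | h
      · exact Or.inl h
      · exact Or.inr (hbad h)
    have hSne : S.Nonempty := ⟨t₀, ht₀S⟩
    have hSbd : BddBelow S := ⟨0, fun s hs => hs.1.1⟩
    have hScl : IsClosed S := by
      have h1 : IsClosed {t ∈ Set.Icc 0 T | e t - d t ≤ 0} := by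
        have : {t ∈ Set.Icc 0 T | e t - d t ≤ 0}
            = Set.Icc 0 T ∩ (fun t => e t - d t) ⁻¹' Set.Iic 0 := rfl
        rw [this]
        exact ContinuousOn.preimage_isClosed_of_isClosed
          (fun s hs => ((he s hs).sub (hd s hs)).continuousAt.continuousWithinAt)
          isClosed_Icc isClosed_Iic
      have h2 : IsClosed {t ∈ Set.Icc 0 T | ρ t - ζ t ≤ 0} := by
        have : {t ∈ Set.Icc 0 T | ρ t - ζ t ≤ 0}
            = Set.Icc 0 T ∩ (fun t => ρ t - ζ t) ⁻¹' Set.Iic 0 := rfl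
        rw [this]
        exact ContinuousOn.preimage_isClosed_of_isClosed
          (fun s hs => ((hρ s hs).sub (hζ s hs)).continuousAt.continuousWithinAt)
          isClosed_Icc isClosed_Iic
      have : S = {t ∈ Set.Icc 0 T | e t - d t ≤ 0} ∪ {t ∈ Set.Icc 0 T | ρ t - ζ t ≤ 0} := by
        ext s
        simp only [hSdef, Set.mem_setOf_eq, Set.mem_union]
        tauto
      rw [this]
      exact h1.union h2
    set t₁ := sInf S with ht₁def
    have ht₁S : t₁ ∈ S := hScl.csInf_mem hSne hSbd
    have ht₁I : t₁ ∈ Set.Icc 0 T := ht₁S.1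
    have h0S : (0:ℝ) ∉ S := by
      intro h
      rcases h.2 with h | h <;> linarith
    have ht₁pos : 0 < t₁ := by
      rcases lt_or_eq_of_le ht₁I.1 with h | h
      · exact h
      · exact absurd (h ▸ ht₁S) h0S
    have hbefore : ∀ s, 0 ≤ s → s < t₁ → 0 < e s - d s ∧ 0 < ρ s - ζ s := by
      intro s hs0 hst
      have hsI : s ∈ Set.Icc 0 T := ⟨hs0, hst.le.trans ht₁I.2⟩
      by_contra h
      push_neg at h
      have hsS : s ∈ S := by
        refine ⟨hsI, ?_⟩
        rcases le_or_gt (e s - d s) 0 with h2 | h2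
        · exact Or.inl h2
        · exact Or.inr (h h2)
      exact absurd (csInf_le hSbd hsS) (not_le.2 hst)
    -- nonnegativity at t₁ by continuity
    have hunn : 0 ≤ e t₁ - d t₁ := by
      have hc : Filter.Tendsto (fun s => e s - d s) (nhdsWithin t₁ (Set.Iio t₁)) (nhds (e t₁ - d t₁)) :=
        (((he t₁ ht₁I).sub (hd t₁ ht₁I)).continuousAt.tendsto).mono_left nhdsWithin_le_nhds
      refine ge_of_tendsto hc ?_
      filter_upwards [Ioo_mem_nhdsLT_of_mem (Set.mem_Ioc.2 ⟨ht₁pos, le_refl t₁⟩)] with s hs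
      exact (hbefore s hs.1.le hs.2).1.le
    have hvnn : 0 ≤ ρ t₁ - ζ t₁ := by
      have hc : Filter.Tendsto (fun s => ρ s - ζ s) (nhdsWithin t₁ (Set.Iio t₁)) (nhds (ρ t₁ - ζ t₁)) :=
        (((hρ t₁ ht₁I).sub (hζ t₁ ht₁I)).continuousAt.tendsto).mono_left nhdsWithin_le_nhds
      refine ge_of_tendsto hc ?_
      filter_upwards [Ioo_mem_nhdsLT_of_mem (Set.mem_Ioc.2 ⟨ht₁pos, le_refl t₁⟩)] with s hs
      exact (hbefore s hs.1.le hs.2).2.le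
    have hsub : Set.Icc 0 t₁ ⊆ Set.Icc 0 T := Set.Icc_subset_Icc le_rfl ht₁I.2
    have hunn' : ∀ s ∈ Set.Icc 0 t₁, 0 ≤ e s - d s := by
      intro s hs
      rcases lt_or_eq_of_le hs.2 with h | h
      · exact (hbefore s hs.1 h).1.le
      · exact h ▸ hunn
    have hvnn' : ∀ s ∈ Set.Icc 0 t₁, 0 ≤ ρ s - ζ s := by
      intro s hs
      rcases lt_or_eq_of_le hs.2 with h | h
      · exact (hbefore s hs.1 h).2.le
      · exact h ▸ hvnn
    rcases ht₁S.2 with hu0 | hv0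
    · -- u t₁ = 0 : use integrating factor exp (C t)
      have hut : e t₁ - d t₁ = 0 := le_antisymm hu0 hunn
      have hmono := cp_mono (f := fun s => (e s - d s) * Real.exp (C s))
        (f' := fun s => ((-(1/(n:ℝ)) * (e s)^2 - (ζ s - 1)) - d' s
            + (1/(n:ℝ)) * (d s + e s) * (e s - d s)) * Real.exp (C s))
        (a := 0) (b := t₁) ht₁I.1 ?_ ?_
      · have hm2 : (e 0 - d 0) * Real.exp (C 0) ≤ (e t₁ - d t₁) * Real.exp (C t₁) := hmono
        rw [hut, hC0, Real.exp_zero] at hm2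
        nlinarith
      · intro t ht
        have htI := hsub ht
        have h1 : HasDerivAt (fun s => Real.exp (C s))
            (Real.exp (C t) * ((1/(n:ℝ)) * ((d ∘ π) t + (e ∘ π) t))) t := (hC t).exp
        have h2 := ((he t htI).sub (hd t htI)).mul h1
        have heqd : (d ∘ π) t = d t := by simp [Function.comp, hπeq t htI]
        have heqe : (e ∘ π) t = e t := by simp [Function.comp, hπeq t htI]
        exact h2.congr_deriv (by rw [heqd, heqe, Pi.sub_apply]; ring)
      · intro t ht
        have htI := hsub ht
        have hb := hd' t htI
        have hv := hvnn' t ht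
        have hEpos := (Real.exp_pos (C t)).le
        apply mul_nonneg _ hEpos
        have hid : (1/(n:ℝ)) * (d t + e t) * (e t - d t)
            = (1/(n:ℝ)) * (e t)^2 - (1/(n:ℝ)) * (d t)^2 := by ring
        nlinarith
    · -- v t₁ = 0 : use integrating factor exp (B t)
      have hvt : ρ t₁ - ζ t₁ = 0 := le_antisymm hv0 hvnn
      have hmono := cp_mono (f := fun s => (ρ s - ζ s) * Real.exp (B s))
        (f' := fun s => Real.exp (B s) * (ζ s * (e s - d s)))
        (a := 0) (b := t₁) ht₁I.1 ?_ ?_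
      · have hm2 : (ρ 0 - ζ 0) * Real.exp (B 0) ≤ (ρ t₁ - ζ t₁) * Real.exp (B t₁) := hmono
        rw [hvt, hB0, Real.exp_zero] at hm2
        nlinarith
      · intro t ht
        have htI := hsub ht
        have h1 : HasDerivAt (fun s => Real.exp (B s))
            (Real.exp (B t) * (d ∘ π) t) t := (hB t).exp
        have h2 := ((hρ t htI).sub (hζ t htI)).mul h1
        have heqd : (d ∘ π) t = d t := by simp [Function.comp, hπeq t htI]
        exact h2.congr_deriv (by rw [heqd, Pi.sub_apply]; ring)
      · intro t ht
        have htI := hsub ht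
        exact mul_nonneg (Real.exp_pos (B t)).le
          (mul_nonneg (hζpos t htI).le (hunn' t ht))
  intro t ht
  obtain ⟨h1, h2⟩ := key t ht
  exact ⟨by linarith, hζpos t ht, by linarith⟩
end

section
/- In region Ω₁, d stays negative: let n ≥ 1 and let (d,ρ) solve d' = -(1/n)d² - (ρ-1), ρ' = -dρ on [0,T) with ρ > 0, and suppose the invariant I := ρ^{-2/n}(d² - nF(ρ)) satisfies I > 0 and d(0) < 0. Then d(t) < 0 for all t ∈ [0,T), and moreover d(t) ≤ -ρ(t)^{1/n}·√I. -/
open Real intervalIntegral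

private noncomputable def fint (n : ℕ) (r : ℝ) : ℝ := (1 - 1/r) * r ^ (-(2 : ℝ)/n)

private lemma fint_contOn (n : ℕ) : ContinuousOn (fint n) (Set.Ioi 0) := by
  intro x hx
  have hx0 : (x : ℝ) ≠ 0 := (Set.mem_Ioi.mp hx).ne'
  exact (((continuousAt_const.sub (continuousAt_const.div continuousAt_id hx0)).mul
    (Real.continuousAt_rpow_const x _ (Or.inl hx0)))).continuousWithinAt

private lemma fint_integrable (n : ℕ) {a b : ℝ} (ha : 0 < a) (hb : 0 < b) :
    IntervalIntegrable (fint n) MeasureTheory.volume a b := by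
  apply ContinuousOn.intervalIntegrable
  apply (fint_contOn n).mono
  intro x hx
  rcases Set.mem_uIcc.mp hx with h | h
  · exact lt_of_lt_of_le ha h.1
  · exact lt_of_lt_of_le hb h.1

private lemma fint_int_nonneg (n : ℕ) {x : ℝ} (hx : 0 < x) :
    0 ≤ ∫ r in (1:ℝ)..x, fint n r := by
  rcases le_or_gt 1 x with h | h
  · apply intervalIntegral.integral_nonneg h
    intro u hu
    have hu1 : (1:ℝ) ≤ u := hu.1
    have hu0 : 0 < u := lt_of_lt_of_le one_pos hu1
    apply mul_nonneg
    · have : 1/u ≤ 1 := by rw [div_le_one hu0]; exact hu1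
      linarith
    · exact Real.rpow_nonneg hu0.le _
  · rw [intervalIntegral.integral_symm]
    have : 0 ≤ ∫ r in x..(1:ℝ), -fint n r := by
      apply intervalIntegral.integral_nonneg h.le
      intro u hu
      have hu0 : 0 < u := lt_of_lt_of_le hx hu.1
      have hu1 : u ≤ 1 := hu.2
      simp only [fint, neg_mul, neg_nonneg]  -- goal: -(...) ≥ 0 i.e. product ≤ 0? adjust
      apply mul_nonpos_of_nonpos_of_nonneg
      · have : 1 ≤ 1/u := by rw [le_div_iff₀ hu0]; linarith
        linarith
      · exact Real.rpow_nonneg hu0.le _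
    rw [intervalIntegral.integral_neg] at this
    linarith

theorem region_Omega1_d_negative (n : ℕ) (hn : 1 ≤ n) (T : ℝ) (d ρ : ℝ → ℝ)
    (hρpos : ∀ t ∈ Set.Ico 0 T, 0 < ρ t)
    (hd : ∀ t ∈ Set.Ico 0 T, HasDerivAt d (-(1/(n : ℝ)) * (d t)^2 - (ρ t - 1)) t)
    (hρ : ∀ t ∈ Set.Ico 0 T, HasDerivAt ρ (-(d t) * ρ t) t)
    (h0 : (0 : ℝ) ∈ Set.Ico 0 T)
    (I : ℝ) (hI : I = (ρ 0) ^ (-(2 : ℝ)/n) * ((d 0)^2 - n * F n (ρ 0)))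
    (hIpos : 0 < I) (hd0 : d 0 < 0) :
    ∀ t ∈ Set.Ico 0 T, d t < 0 ∧ d t ≤ -(ρ t) ^ ((1 : ℝ)/n) * Real.sqrt I := by
  have hn0 : (n : ℝ) ≠ 0 := Nat.cast_ne_zero.mpr (by omega)
  set G : ℝ → ℝ := fun t => (ρ t) ^ (-(2:ℝ)/n) * (d t)^2 - 2 * ∫ r in (1:ℝ)..ρ t, fint n r
    with hGdef
  -- derivative of G is 0 on Ico 0 T
  have hGderiv : ∀ t ∈ Set.Ico 0 T, HasDerivAt G 0 t := by
    intro t ht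
    have hρt : 0 < ρ t := hρpos t ht
    have h1 : HasDerivAt (fun s => (ρ s) ^ (-(2:ℝ)/n))
        ((-(d t) * ρ t) * (-(2:ℝ)/n) * (ρ t) ^ ((-(2:ℝ)/n) - 1)) t :=
      (hρ t ht).rpow_const (Or.inl hρt.ne')
    have h2 : HasDerivAt (fun s => (d s)^2)
        (2 * (d t) ^ 1 * (-(1/(n : ℝ)) * (d t)^2 - (ρ t - 1))) t := by
      simpa using (hd t ht).fun_pow 2
    have h3 : HasDerivAt (fun x => ∫ r in (1:ℝ)..x, fint n r) (fint n (ρ t)) (ρ t) := by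
      apply intervalIntegral.integral_hasDerivAt_right
        (fint_integrable n one_pos hρt)
        (ContinuousOn.stronglyMeasurableAtFilter isOpen_Ioi (fint_contOn n) _ hρt)
      exact (fint_contOn n).continuousAt (isOpen_Ioi.mem_nhds hρt)
    have h4 : HasDerivAt (fun s => ∫ r in (1:ℝ)..ρ s, fint n r)
        (fint n (ρ t) * (-(d t) * ρ t)) t := h3.comp t (hρ t ht)
    have h5 := ((h1.fun_mul h2).fun_sub (h4.const_mul 2))
    refine h5.congr_deriv ?_
    have hsub : (ρ t) ^ ((-(2:ℝ)/n) - 1) = (ρ t) ^ (-(2:ℝ)/n) / ρ t := by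
      rw [Real.rpow_sub hρt, Real.rpow_one]
    rw [hsub]
    simp only [fint]
    field_simp
    ring
  -- G is constant equal to I
  have hG0 : G 0 = I := by
    have hρ0 : 0 < ρ 0 := hρpos 0 h0
    have hcancel : (ρ 0) ^ (-(2:ℝ)/n) * (ρ 0) ^ ((2:ℝ)/n) = 1 := by
      rw [← Real.rpow_add hρ0]
      norm_num
      rw [neg_div, neg_add_cancel, Real.rpow_zero]
    have hnF : (n:ℝ) * F n (ρ 0) =
        2 * ((ρ 0) ^ ((2:ℝ)/n) * ∫ r in (1:ℝ)..ρ 0, fint n r) := by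
      simp only [F, fint]
      field_simp
    simp only [hGdef, hI]
    rw [hnF]
    linear_combination (2 * ∫ r in (1:ℝ)..ρ 0, fint n r) * hcancel
  have hGconst : ∀ t ∈ Set.Ico 0 T, G t = I := by
    intro t ht
    have hsub : Set.Icc 0 t ⊆ Set.Ico 0 T := fun x hx =>
      ⟨hx.1, lt_of_le_of_lt hx.2 ht.2⟩
    have hcont : ContinuousOn G (Set.Icc 0 t) := fun x hx =>
      ((hGderiv x (hsub hx)).continuousAt).continuousWithinAt
    have := constant_of_has_deriv_right_zero hcont
      (fun x hx => (hGderiv x (hsub ⟨hx.1, hx.2.le⟩)).hasDerivWithinAt)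
      t (Set.right_mem_Icc.mpr ht.1)
    rw [this, hG0]
  -- key inequality : ρ^{2/n} I ≤ d²
  have hkey : ∀ t ∈ Set.Ico 0 T, (ρ t) ^ ((2:ℝ)/n) * I ≤ (d t)^2 := by
    intro t ht
    have hρt : 0 < ρ t := hρpos t ht
    have hab : (ρ t) ^ ((2:ℝ)/n) * (ρ t) ^ (-(2:ℝ)/n) = 1 := by
      rw [← Real.rpow_add hρt, show (2:ℝ)/n + -2/n = 0 by ring, Real.rpow_zero]
    have hJ : 0 ≤ ∫ r in (1:ℝ)..ρ t, fint n r := fint_int_nonneg n hρt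
    have ha : (0:ℝ) < (ρ t) ^ ((2:ℝ)/n) := Real.rpow_pos_of_pos hρt _
    have hGt : (ρ t) ^ (-(2:ℝ)/n) * (d t)^2 - 2 * ∫ r in (1:ℝ)..ρ t, fint n r = I :=
      hGconst t ht
    nlinarith [mul_nonneg ha.le hJ]
  have hdsq_pos : ∀ t ∈ Set.Ico 0 T, 0 < (d t)^2 := fun t ht =>
    lt_of_lt_of_le (mul_pos (Real.rpow_pos_of_pos (hρpos t ht) _) hIpos) (hkey t ht)
  have hdne : ∀ t ∈ Set.Ico 0 T, d t ≠ 0 := by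
    intro t ht h
    have := hdsq_pos t ht
    rw [h] at this; simp at this
  -- d stays negative
  have hdneg : ∀ t ∈ Set.Ico 0 T, d t < 0 := by
    intro t ht
    by_contra h
    push_neg at h
    have hpos : 0 < d t := lt_of_le_of_ne h (Ne.symm (hdne t ht))
    have hsub : Set.Icc 0 t ⊆ Set.Ico 0 T := fun x hx =>
      ⟨hx.1, lt_of_le_of_lt hx.2 ht.2⟩
    have hcont : ContinuousOn d (Set.Icc 0 t) := fun x hx =>
      ((hd x (hsub hx)).continuousAt).continuousWithinAt
    have := intermediate_value_Icc ht.1 hcont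
    have h0mem : (0:ℝ) ∈ Set.Icc (d 0) (d t) := ⟨hd0.le, hpos.le⟩
    obtain ⟨c, hc, hdc⟩ := this h0mem
    exact hdne c (hsub hc) hdc
  intro t ht
  refine ⟨hdneg t ht, ?_⟩
  have hρt : 0 < ρ t := hρpos t ht
  set x : ℝ := (ρ t) ^ ((1:ℝ)/n) * Real.sqrt I with hxdef
  have hxnn : 0 ≤ x := mul_nonneg (Real.rpow_pos_of_pos hρt _).le (Real.sqrt_nonneg _)
  have hx2 : x^2 = (ρ t) ^ ((2:ℝ)/n) * I := by
    rw [hxdef, mul_pow, Real.sq_sqrt hIpos.le, ← Real.rpow_natCast ((ρ t) ^ ((1:ℝ)/n)) 2,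
      ← Real.rpow_mul hρt.le, show ((1:ℝ)/n) * ((2:ℕ):ℝ) = 2/(n:ℝ) by push_cast; ring]
  have hle : x^2 ≤ (d t)^2 := by rw [hx2]; exact hkey t ht
  have hdt : d t < 0 := hdneg t ht
  nlinarith [hle, hxnn, hdt]
end

section
/- In region Ω₂, ρ stays above 1: let n ≥ 1 and let (d,ρ) solve d' = -(1/n)d² - (ρ-1), ρ' = -dρ on [0,T) with ρ > 0, and suppose I := ρ^{-2/n}(d² - nF(ρ)) satisfies I < 0 and ρ(0) > 1. Then ρ(t) > 1 for all t ∈ [0,T), and moreover ρ(t) - 1 ≥ -I/2. -/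
open Real intervalIntegral

theorem region_Omega2_rho_above_one (n : ℕ) (hn : 1 ≤ n) (T : ℝ) (d ρ : ℝ → ℝ)
    (hρpos : ∀ t ∈ Set.Ico 0 T, 0 < ρ t)
    (hd : ∀ t ∈ Set.Ico 0 T, HasDerivAt d (-(1/(n : ℝ)) * (d t)^2 - (ρ t - 1)) t)
    (hρ : ∀ t ∈ Set.Ico 0 T, HasDerivAt ρ (-(d t) * ρ t) t)
    (h0 : (0 : ℝ) ∈ Set.Ico 0 T)
    (I : ℝ) (hI : I = (ρ 0) ^ (-(2 : ℝ)/n) * ((d 0)^2 - n * F n (ρ 0)))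
    (hIneg : I < 0) (hρ0 : 1 < ρ 0) :
    ∀ t ∈ Set.Ico 0 T, 1 < ρ t ∧ -I/2 ≤ ρ t - 1 := by
  have hn0 : (0 : ℝ) < n := by exact_mod_cast hn
  set g : ℝ → ℝ := fun r => (1 - 1/r) * r ^ (-(2 : ℝ)/n) with hg
  have hgcont : ∀ r : ℝ, 0 < r → ContinuousAt g r := by
    intro r hr
    exact ((continuousAt_const.sub ((continuousAt_const).div continuousAt_id hr.ne')).mul
      (Real.continuousAt_rpow_const _ _ (Or.inl hr.ne')))
  have hgcontOn : ContinuousOn g (Set.Ioi 0) :=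
    fun r hr => (hgcont r hr).continuousWithinAt
  have hgint : ∀ a b : ℝ, 0 < a → 0 < b → IntervalIntegrable g MeasureTheory.volume a b := by
    intro a b ha hb
    apply ContinuousOn.intervalIntegrable
    apply hgcontOn.mono
    intro x hx
    rcases Set.mem_uIcc.1 hx with ⟨h1, _⟩ | ⟨h1, _⟩
    · exact lt_of_lt_of_le ha h1
    · exact lt_of_lt_of_le hb h1
  set G : ℝ → ℝ := fun u => ∫ r in (1:ℝ)..u, g r with hGdef
  set J : ℝ → ℝ := fun t => ρ t ^ (-(2 : ℝ)/n) * (d t)^2 - 2 * G (ρ t) with hJdef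
  -- derivative of J is 0 on Ico 0 T
  have hJderiv : ∀ t ∈ Set.Ico 0 T, HasDerivAt J 0 t := by
    intro t ht
    have hρt : 0 < ρ t := hρpos t ht
    have hGt : HasDerivAt G (g (ρ t)) (ρ t) :=
      intervalIntegral.integral_hasDerivAt_right (hgint 1 (ρ t) one_pos hρt)
        (hgcontOn.stronglyMeasurableAtFilter isOpen_Ioi _ hρt) (hgcont _ hρt)
    have hGc : HasDerivAt (fun t => G (ρ t)) (g (ρ t) * (-(d t) * ρ t)) t :=
      hGt.comp t (hρ t ht)
    have hpow : HasDerivAt (fun t => ρ t ^ (-(2 : ℝ)/n))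
        ((-(d t) * ρ t) * (-(2 : ℝ)/n) * ρ t ^ (-(2 : ℝ)/n - 1)) t :=
      (hρ t ht).rpow_const (Or.inl hρt.ne')
    have hd2 : HasDerivAt (fun t => (d t)^2)
        ((2 : ℕ) * (d t) ^ (2-1) * (-(1/(n : ℝ)) * (d t)^2 - (ρ t - 1))) t :=
      (hd t ht).pow 2
    have hmul := (hpow.mul hd2).sub ((hGc.const_mul (2:ℝ)))
    have hBA : ρ t ^ (-(2 : ℝ)/n - 1) * ρ t = ρ t ^ (-(2 : ℝ)/n) := by
      rw [← Real.rpow_add_one hρt.ne' (-(2 : ℝ)/n - 1)]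
      norm_num
    have h3 : g (ρ t) * (-(d t) * ρ t) = (-(d t) * (ρ t - 1)) * ρ t ^ (-(2 : ℝ)/n) := by
      show (1 - 1/ρ t) * ρ t ^ (-(2 : ℝ)/n) * (-(d t) * ρ t)
        = (-(d t) * (ρ t - 1)) * ρ t ^ (-(2 : ℝ)/n)
      field_simp
    refine hmul.congr_deriv ?_
    symm
    rw [h3]
    push_cast
    linear_combination (-(2:ℝ)/n * (d t)^3) * hBA
  have hJconst : ∀ t ∈ Set.Ico 0 T, J t = J 0 := by
    intro t ht
    have hsub : Set.Icc (0:ℝ) t ⊆ Set.Ico 0 T := fun x hx =>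
      ⟨hx.1, lt_of_le_of_lt hx.2 ht.2⟩
    have hcont : ContinuousOn J (Set.Icc 0 t) := fun x hx =>
      ((hJderiv x (hsub hx)).continuousAt).continuousWithinAt
    exact constant_of_has_deriv_right_zero hcont
      (fun x hx => ((hJderiv x (hsub (Set.mem_Icc_of_Ico hx))).hasDerivWithinAt))
      t (Set.mem_Icc.2 ⟨ht.1, le_refl t⟩)
  -- J 0 = I
  have hρ0pos : 0 < ρ 0 := hρpos 0 h0
  have hJ0 : J 0 = I := by
    have hFρ0 : (n : ℝ) * F n (ρ 0) = 2 * (ρ 0 ^ ((2 : ℝ)/n) * G (ρ 0)) := by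
      rw [F, show (∫ r in (1 : ℝ)..ρ 0, (1 - 1/r) * r ^ (-(2 : ℝ)/n)) = G (ρ 0) from rfl]; field_simp
    have hunit : ρ 0 ^ (-(2 : ℝ)/n) * ρ 0 ^ ((2 : ℝ)/n) = 1 := by
      rw [← Real.rpow_add hρ0pos, show (-2/(n:ℝ) + 2/n) = 0 by ring, Real.rpow_zero]
    rw [hJdef]
    simp only
    rw [hI, hFρ0]
    linear_combination (2 * G (ρ 0)) * hunit
  -- ρ stays above 1
  have hone : ∀ t ∈ Set.Ico 0 T, 1 < ρ t := by
    intro t ht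
    by_contra hle
    push_neg at hle
    have hsub : Set.Icc (0:ℝ) t ⊆ Set.Ico 0 T := fun x hx =>
      ⟨hx.1, lt_of_le_of_lt hx.2 ht.2⟩
    have hρcont : ContinuousOn ρ (Set.Icc 0 t) := fun x hx =>
      ((hρ x (hsub hx)).continuousAt).continuousWithinAt
    have h1mem : (1:ℝ) ∈ Set.Icc (ρ t) (ρ 0) := ⟨hle, hρ0.le⟩
    obtain ⟨s, hs, hρs⟩ := intermediate_value_Icc' ht.1 hρcont h1mem
    have hsT : s ∈ Set.Ico 0 T := hsub hs
    have hJs : J s = I := (hJconst s hsT).trans hJ0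
    have : J s = (d s)^2 := by
      rw [hJdef]; simp only [hρs]
      rw [hGdef]; simp [Real.one_rpow]
    nlinarith [sq_nonneg (d s)]
  intro t ht
  refine ⟨hone t ht, ?_⟩
  have hρt1 : 1 < ρ t := hone t ht
  have hρt : 0 < ρ t := hρpos t ht
  -- G (ρ t) ≤ ρ t - 1
  have hGle : G (ρ t) ≤ ρ t - 1 := by
    have hint1 : IntervalIntegrable (fun _ : ℝ => (1:ℝ)) MeasureTheory.volume 1 (ρ t) :=
      intervalIntegrable_const
    have hmono := intervalIntegral.integral_mono_on hρt1.le (hgint 1 (ρ t) one_pos hρt) hint1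
      (fun x hx => by
        have hx1 : 1 ≤ x := hx.1
        have hx0 : 0 < x := lt_of_lt_of_le one_pos hx1
        have h1 : 1 - 1/x ≤ 1 := by
          have : 0 < 1/x := by positivity
          linarith
        have h1' : 0 ≤ 1 - 1/x := by
          have : 1/x ≤ 1 := by
            rw [div_le_one hx0]; exact hx1
          linarith
        have h2 : x ^ (-(2:ℝ)/n) ≤ 1 := by
          apply Real.rpow_le_one_of_one_le_of_nonpos hx1
          exact div_nonpos_of_nonpos_of_nonneg (by norm_num) hn0.le
        have h2' : 0 ≤ x ^ (-(2:ℝ)/n) := Real.rpow_nonneg hx0.le _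
        calc g x = (1 - 1/x) * x ^ (-(2:ℝ)/n) := rfl
          _ ≤ 1 := mul_le_one₀ h1 h2' h2)
    calc G (ρ t) ≤ ∫ _ in (1:ℝ)..(ρ t), (1:ℝ) := hmono
      _ = ρ t - 1 := by simp
  have hJt : J t = I := (hJconst t ht).trans hJ0
  have hpownn : 0 ≤ ρ t ^ (-(2:ℝ)/n) * (d t)^2 := by positivity
  have hIlb : I ≥ -2 * (ρ t - 1) := by
    rw [← hJt, hJdef]
    simp only
    nlinarith
  linarith
end

section
/- Blow-up of the majorant system: let n ≥ 1 and let (d,ρ) be a maximal C¹ solution on [0,T) of d' = -(1/n)d² - (ρ-1), ρ' = -dρ with ρ(0) > 0 and d(0) < sgn(ρ(0)-1)·√(nF(ρ(0))). Then T < ∞, and d(t) → -∞, ρ(t) → +∞ as t ↑ T. -/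
open Real Filter intervalIntegral Set Metric


noncomputable def Jf (n : ℕ) (x : ℝ) : ℝ :=
  ∫ r in (1 : ℝ)..x, (1 - 1/r) * r ^ (-(2 : ℝ)/n)

lemma F_eq_J (n : ℕ) (x : ℝ) : F n x = (2/(n : ℝ)) * x ^ ((2 : ℝ)/n) * Jf n x := rfl

lemma contOn_g (n : ℕ) :
    ContinuousOn (fun r : ℝ => (1 - 1/r) * r ^ (-(2 : ℝ)/n)) (Set.Ioi 0) := by
  intro x hx
  have hx0 : (x : ℝ) ≠ 0 := ne_of_gt hx
  exact (((continuousAt_const.sub (continuousAt_const.div continuousAt_id hx0)).mul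
    (Real.continuousAt_rpow_const x _ (Or.inl hx0)))).continuousWithinAt

lemma intInt_g (n : ℕ) {a b : ℝ} (ha : 0 < a) (hb : 0 < b) :
    IntervalIntegrable (fun r : ℝ => (1 - 1/r) * r ^ (-(2 : ℝ)/n)) MeasureTheory.volume a b := by
  apply ContinuousOn.intervalIntegrable
  apply (contOn_g n).mono
  intro x hx
  rcases hx with ⟨h1, _⟩
  have : (0:ℝ) < min a b := lt_min ha hb
  exact lt_of_lt_of_le this h1

lemma hasDerivAt_J (n : ℕ) {x : ℝ} (hx : 0 < x) :
    HasDerivAt (Jf n) ((1 - 1/x) * x ^ (-(2 : ℝ)/n)) x := by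
  apply intervalIntegral.integral_hasDerivAt_right (intInt_g n one_pos hx)
  · exact (ContinuousOn.stronglyMeasurableAtFilter isOpen_Ioi (contOn_g n) x hx)
  · exact (contOn_g n).continuousAt (Ioi_mem_nhds hx)

lemma J_one (n : ℕ) : Jf n 1 = 0 := by
  simp [Jf]

lemma g_nonneg (n : ℕ) {r : ℝ} (hr : 1 ≤ r) : 0 ≤ (1 - 1/r) * r ^ (-(2 : ℝ)/n) := by
  have h1 : (0:ℝ) < r := lt_of_lt_of_le one_pos hr
  have : 1/r ≤ 1 := by
    rw [div_le_one h1]; exact hr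
  have h2 : (0:ℝ) ≤ 1 - 1/r := by linarith
  exact mul_nonneg h2 (Real.rpow_nonneg h1.le _)

lemma g_nonpos (n : ℕ) {r : ℝ} (hr0 : 0 < r) (hr : r ≤ 1) :
    (1 - 1/r) * r ^ (-(2 : ℝ)/n) ≤ 0 := by
  have : 1 ≤ 1/r := by
    rw [le_div_iff₀ hr0]; linarith
  have h2 : 1 - 1/r ≤ (0:ℝ) := by linarith
  exact mul_nonpos_of_nonpos_of_nonneg h2 (Real.rpow_nonneg hr0.le _)

lemma J_nonneg (n : ℕ) {x : ℝ} (hx : 0 < x) : 0 ≤ Jf n x := by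
  rcases le_or_gt 1 x with h | h
  · exact intervalIntegral.integral_nonneg h (fun u hu => g_nonneg n hu.1)
  · have hsymm : Jf n x = -∫ r in x..(1:ℝ), (1 - 1/r) * r ^ (-(2 : ℝ)/n) := by
      rw [Jf, intervalIntegral.integral_symm]
    have h2 : 0 ≤ ∫ r in x..(1:ℝ), -((1 - 1/r) * r ^ (-(2 : ℝ)/n)) :=
      intervalIntegral.integral_nonneg h.le
        (fun u hu => neg_nonneg.2 (g_nonpos n (lt_of_lt_of_le hx hu.1) hu.2))
    rw [intervalIntegral.integral_neg] at h2
    rw [hsymm]; linarith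

lemma J_mono (n : ℕ) {a b : ℝ} (ha : 1 ≤ a) (hab : a ≤ b) : Jf n a ≤ Jf n b := by
  have ha0 : (0:ℝ) < a := lt_of_lt_of_le one_pos ha
  have hb0 : (0:ℝ) < b := lt_of_lt_of_le ha0 hab
  have hadd := intervalIntegral.integral_add_adjacent_intervals
    (intInt_g n one_pos ha0) (intInt_g n ha0 hb0)
  have hnn : 0 ≤ ∫ r in a..b, (1 - 1/r) * r ^ (-(2 : ℝ)/n) :=
    intervalIntegral.integral_nonneg hab (fun u hu => g_nonneg n (le_trans ha hu.1))
  rw [Jf, Jf, ← hadd]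
  linarith

lemma J_anti (n : ℕ) {a b : ℝ} (ha : 0 < a) (hab : a ≤ b) (hb : b ≤ 1) : Jf n b ≤ Jf n a := by
  have hb0 : (0:ℝ) < b := lt_of_lt_of_le ha hab
  have hadd := intervalIntegral.integral_add_adjacent_intervals
    (intInt_g n one_pos ha) (intInt_g n ha hb0)
  have hnp : (∫ r in a..b, (1 - 1/r) * r ^ (-(2 : ℝ)/n)) ≤ 0 := by
    have h2 : 0 ≤ ∫ r in a..b, -((1 - 1/r) * r ^ (-(2 : ℝ)/n)) :=
      intervalIntegral.integral_nonneg hab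
        (fun u hu => neg_nonneg.2 (g_nonpos n (lt_of_lt_of_le ha hu.1) (le_trans hu.2 hb)))
    rw [intervalIntegral.integral_neg] at h2
    linarith
  rw [Jf, Jf, ← hadd]
  linarith

/-- monotone from derivative sign on an Icc -/
lemma monoOn_of_hasDerivAt (f f' : ℝ → ℝ) (a b : ℝ)
    (h : ∀ t ∈ Icc a b, HasDerivAt f (f' t) t) (h0 : ∀ t ∈ Ioo a b, 0 ≤ f' t) :
    MonotoneOn f (Icc a b) := by
  apply monotoneOn_of_deriv_nonneg (convex_Icc a b)
  · exact continuousOn_of_forall_continuousAt (fun x hx => (h x hx).continuousAt)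
  · intro x hx
    rw [interior_Icc] at hx
    exact (h x (Ioo_subset_Icc_self hx)).differentiableAt.differentiableWithinAt
  · intro x hx
    rw [interior_Icc] at hx
    rw [(h x (Ioo_subset_Icc_self hx)).deriv]
    exact h0 x hx

lemma antiOn_of_hasDerivAt (f f' : ℝ → ℝ) (a b : ℝ)
    (h : ∀ t ∈ Icc a b, HasDerivAt f (f' t) t) (h0 : ∀ t ∈ Ioo a b, f' t ≤ 0) :
    AntitoneOn f (Icc a b) := by
  apply antitoneOn_of_deriv_nonpos (convex_Icc a b)
  · exact continuousOn_of_forall_continuousAt (fun x hx => (h x hx).continuousAt)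
  · intro x hx
    rw [interior_Icc] at hx
    exact (h x (Ioo_subset_Icc_self hx)).differentiableAt.differentiableWithinAt
  · intro x hx
    rw [interior_Icc] at hx
    rw [(h x (Ioo_subset_Icc_self hx)).deriv]
    exact h0 x hx

/-- a function Lipschitz on `Ico a b` has a limit from the left at `b`. -/
lemma exists_tendsto_of_lip (f : ℝ → ℝ) (a b C : ℝ) (hab : a < b) (hC : 0 ≤ C)
    (hL : ∀ s ∈ Set.Ico a b, ∀ t ∈ Set.Ico a b, |f s - f t| ≤ C * |s - t|) :
    ∃ L, Tendsto f (nhdsWithin b (Set.Iio b)) (nhds L) := by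
  have hne : (nhdsWithin b (Set.Iio b)).NeBot := nhdsLT_neBot b
  have hcauchy : Cauchy ((nhdsWithin b (Set.Iio b)).map f) := by
    rw [Metric.cauchy_iff]
    constructor
    · exact Filter.map_neBot
    · intro ε hε
      set η := min (ε / (2 * C + 1)) (b - a) with hη
      have hη0 : 0 < η := lt_min (by positivity) (by linarith)
      refine ⟨f '' (Set.Ioo (b - η) b), Filter.image_mem_map ?_, ?_⟩
      · exact Ioo_mem_nhdsLT_of_mem ⟨by linarith, le_rfl⟩
      · rintro x ⟨s, hs, rfl⟩ y ⟨t, ht, rfl⟩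
        have hη2 : η ≤ b - a := min_le_right _ _
        have hs' : s ∈ Set.Ico a b := ⟨by have := hs.1; linarith, hs.2⟩
        have ht' : t ∈ Set.Ico a b := ⟨by have := ht.1; linarith, ht.2⟩
        have h1 := hL s hs' t ht'
        have h2 : |s - t| ≤ η := by
          rw [abs_le]; constructor <;> [skip; skip] <;>
            · have := hs.1; have := hs.2; have := ht.1; have := ht.2; linarith
        have h3 : η ≤ ε / (2 * C + 1) := min_le_left _ _
        have : C * |s - t| ≤ C * (ε / (2 * C + 1)) :=
          mul_le_mul_of_nonneg_left (le_trans h2 h3) hC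
        have hlt : C * (ε / (2 * C + 1)) < ε := by
          rw [div_eq_inv_mul]
          have h4 : C < 2 * C + 1 := by linarith
          have h5 : (0:ℝ) < 2 * C + 1 := by linarith
          calc C * ((2 * C + 1)⁻¹ * ε) = (C / (2 * C + 1)) * ε := by ring
          _ < 1 * ε := by
              apply mul_lt_mul_of_pos_right _ hε
              rw [div_lt_one h5]; exact h4
          _ = ε := one_mul ε
        calc dist (f s) (f t) = |f s - f t| := Real.dist_eq _ _
        _ ≤ C * |s - t| := h1
        _ ≤ C * (ε / (2 * C + 1)) := this
        _ < ε := hlt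
  obtain ⟨L, hLle⟩ := CompleteSpace.complete hcauchy
  exact ⟨L, hLle⟩

/-- Picard–Lindelöf existence keeping the closed-ball membership of the solution. -/
theorem pl_exists_mem {E : Type*} [NormedAddCommGroup E] [NormedSpace ℝ E] [CompleteSpace E]
    {v : ℝ → E → E} {tMin t₀ tMax : ℝ} (ht₀ : t₀ ∈ Icc tMin tMax) (x₀ : E) {a C L : NNReal}
    (hpl : IsPicardLindelof v (⟨t₀, ht₀⟩ : Icc tMin tMax) x₀ a 0 C L) :
    ∃ f : ℝ → E, f t₀ = x₀ ∧ ∀ t ∈ Icc tMin tMax,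
      HasDerivWithinAt f (v t (f t)) (Icc tMin tMax) t ∧ f t ∈ Metric.closedBall x₀ (a : ℝ) := by
  obtain ⟨α, hα⟩ := ODE.FunSpace.exists_isFixedPt_next hpl (mem_closedBall_self le_rfl)
  refine ⟨α.compProj, ?_, fun t ht => ⟨?_, α.compProj_mem_closedBall hpl.mul_max_le⟩⟩
  · have h1 := α.compProj_val (t := ⟨t₀, ht₀⟩)
    rw [h1, ← hα, ODE.FunSpace.next_apply₀]
  · apply ODE.hasDerivWithinAt_picard_Icc ht₀ hpl.continuousOn_uncurry
      α.continuous_compProj.continuousOn (fun _ ht' ↦ α.compProj_mem_closedBall hpl.mul_max_le)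
      x₀ ht |>.congr_of_mem _ ht
    intro t' ht'
    nth_rw 1 [← hα]
    rw [ODE.FunSpace.compProj_of_mem ht', ODE.FunSpace.next_apply]

section Sys
variable (n : ℕ) (d ρ : ℝ → ℝ)

/-- the conserved quantity -/
noncomputable def Gq (t : ℝ) : ℝ := (d t)^2 * (ρ t) ^ (-(2:ℝ)/n) - 2 * Jf n (ρ t)

variable {n d ρ}
variable (hn : 1 ≤ n) {b : ℝ}
  (hs : ∀ t, 0 ≤ t → t ≤ b →
      HasDerivAt d (-(1/(n : ℝ)) * (d t)^2 - (ρ t - 1)) t ∧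
      HasDerivAt ρ (-(d t) * ρ t) t ∧ 0 < ρ t)

include hn hs

lemma hasDerivAt_Gq {t : ℝ} (h0 : 0 ≤ t) (hb : t ≤ b) :
    HasDerivAt (Gq n d ρ) 0 t := by
  obtain ⟨hd, hρ, hρpos⟩ := hs t h0 hb
  have hn' : (0:ℝ) < n := Nat.cast_pos.mpr (lt_of_lt_of_le Nat.one_pos hn)
  have hρ0 : ρ t ≠ 0 := ne_of_gt hρpos
  have h1 : HasDerivAt (fun s => (d s)^2)
      ((2:ℕ) * (d t)^(2-1) * (-(1/(n : ℝ)) * (d t)^2 - (ρ t - 1))) t := hd.pow 2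
  have h2 : HasDerivAt (fun s => (ρ s) ^ (-(2:ℝ)/n))
      ((-(d t) * ρ t) * (-(2:ℝ)/n) * (ρ t) ^ (-(2:ℝ)/n - 1)) t :=
    hρ.rpow_const (Or.inl hρ0)
  have h3 : HasDerivAt (fun s => Jf n (ρ s))
      (((1 - 1/(ρ t)) * (ρ t) ^ (-(2:ℝ)/n)) * (-(d t) * ρ t)) t :=
    (hasDerivAt_J n hρpos).comp t hρ
  have h4 : HasDerivAt (fun s => 2 * Jf n (ρ s))
      (2 * (((1 - 1/(ρ t)) * (ρ t) ^ (-(2:ℝ)/n)) * (-(d t) * ρ t))) t := h3.const_mul 2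
  have h5 := (h1.mul h2).sub h4
  have hval : ((2:ℕ) * (d t)^(2-1) * (-(1/(n : ℝ)) * (d t)^2 - (ρ t - 1))) * ((ρ t) ^ (-(2:ℝ)/n))
      + (d t)^2 * ((-(d t) * ρ t) * (-(2:ℝ)/n) * (ρ t) ^ (-(2:ℝ)/n - 1))
      - 2 * (((1 - 1/(ρ t)) * (ρ t) ^ (-(2:ℝ)/n)) * (-(d t) * ρ t)) = 0 := by
    have hsub : (ρ t) ^ (-(2:ℝ)/n - 1) = (ρ t) ^ (-(2:ℝ)/n) / ρ t := by
      rw [Real.rpow_sub hρpos, Real.rpow_one]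
    rw [hsub]
    have hn0 : (n:ℝ) ≠ 0 := ne_of_gt hn'
    field_simp
    ring
  rw [hval] at h5
  exact h5

lemma Gq_conserved {t : ℝ} (h0 : 0 ≤ t) (hb : t ≤ b) :
    Gq n d ρ t = Gq n d ρ 0 := by
  have hder : ∀ x ∈ Ico (0:ℝ) t, HasDerivWithinAt (Gq n d ρ) 0 (Ici x) x := by
    intro x hx
    exact (hasDerivAt_Gq hn hs hx.1 (le_trans hx.2.le hb)).hasDerivWithinAt
  have hcont : ContinuousOn (Gq n d ρ) (Icc 0 t) := by
    intro x hx
    exact (hasDerivAt_Gq hn hs hx.1 (le_trans hx.2 hb)).continuousAt.continuousWithinAt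
  exact constant_of_has_deriv_right_zero hcont hder t ⟨h0, le_rfl⟩

/-- monotonicity of d (down) and ρ (up) given Good on the open interval -/
lemma mono_good {t₀ c : ℝ} (h0 : 0 ≤ t₀) (hcb : c ≤ b)
    (hGood : ∀ t, t₀ < t → t < c → d t < 0 ∧ 1 < ρ t) :
    AntitoneOn d (Icc t₀ c) ∧ MonotoneOn ρ (Icc t₀ c) := by
  have hn' : (0:ℝ) < n := Nat.cast_pos.mpr (lt_of_lt_of_le Nat.one_pos hn)
  have hmem : ∀ t ∈ Icc t₀ c, 0 ≤ t ∧ t ≤ b := fun t ht => ⟨le_trans h0 ht.1, le_trans ht.2 hcb⟩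
  constructor
  · apply antiOn_of_hasDerivAt d (fun t => -(1/(n : ℝ)) * (d t)^2 - (ρ t - 1)) t₀ c
    · intro t ht; exact (hs t (hmem t ht).1 (hmem t ht).2).1
    · intro t ht
      obtain ⟨h1, h2⟩ := hGood t ht.1 ht.2
      have : (0:ℝ) ≤ (1/(n : ℝ)) * (d t)^2 := by positivity
      linarith
  · apply monoOn_of_hasDerivAt ρ (fun t => -(d t) * ρ t) t₀ c
    · intro t ht; exact (hs t (hmem t ht).1 (hmem t ht).2).2.1
    · intro t ht
      obtain ⟨h1, h2⟩ := hGood t ht.1 ht.2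
      have hρpos := (hs t (hmem t (Ioo_subset_Icc_self ht)).1 (hmem t (Ioo_subset_Icc_self ht)).2).2.2
      nlinarith

/-- invariance of the trapping region -/
lemma invariance {t₀ : ℝ} (h0 : 0 ≤ t₀) (ht₀b : t₀ ≤ b)
    (hd0 : d t₀ < 0) (hρ0 : 1 < ρ t₀) :
    ∀ t, t₀ ≤ t → t ≤ b → d t < 0 ∧ 1 < ρ t := by
  by_contra hcon
  push_neg at hcon
  obtain ⟨t₁, ht₁, ht₁b, hbad⟩ := hcon
  set B : Set ℝ := {s : ℝ | s ∈ Icc t₀ b ∧ ¬(d s < 0 ∧ 1 < ρ s)} with hB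
  have hBne : B.Nonempty := ⟨t₁, ⟨ht₁, ht₁b⟩, fun hg => not_le.mpr hg.2 (hbad hg.1)⟩
  have hBbdd : BddBelow B := ⟨t₀, fun x hx => hx.1.1⟩
  set s₁ := sInf B with hs₁
  have hs₁lb : t₀ ≤ s₁ := le_csInf hBne (fun x hx => hx.1.1)
  have hs₁ub : s₁ ≤ b := le_trans (csInf_le hBbdd hBne.choose_spec) hBne.choose_spec.1.2
  have hGoodIoo : ∀ u, t₀ < u → u < s₁ → d u < 0 ∧ 1 < ρ u := by
    intro u hu1 hu2
    by_contra hug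
    have : u ∈ B := ⟨⟨hu1.le, le_trans hu2.le hs₁ub⟩, hug⟩
    exact absurd (csInf_le hBbdd this) (not_le.mpr hu2)
  obtain ⟨hanti, hmono⟩ := mono_good hn hs h0 hs₁ub hGoodIoo
  have hds₁ : d s₁ ≤ d t₀ := hanti ⟨le_rfl, hs₁lb⟩ ⟨hs₁lb, le_rfl⟩ hs₁lb
  have hρs₁ : ρ t₀ ≤ ρ s₁ := hmono ⟨le_rfl, hs₁lb⟩ ⟨hs₁lb, le_rfl⟩ hs₁lb
  have hGoods₁ : d s₁ < 0 ∧ 1 < ρ s₁ := ⟨lt_of_le_of_lt hds₁ hd0, lt_of_lt_of_le hρ0 hρs₁⟩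
  have hcd : ContinuousAt d s₁ := (hs s₁ (le_trans h0 hs₁lb) hs₁ub).1.continuousAt
  have hcρ : ContinuousAt ρ s₁ := (hs s₁ (le_trans h0 hs₁lb) hs₁ub).2.1.continuousAt
  have h1 : ∀ᶠ x in nhds s₁, d x < 0 := hcd.eventually (eventually_lt_nhds hGoods₁.1)
  have h2 : ∀ᶠ x in nhds s₁, 1 < ρ x := hcρ.eventually (eventually_gt_nhds hGoods₁.2)
  obtain ⟨δ, hδ0, hδ⟩ := Metric.eventually_nhds_iff.mp (h1.and h2)
  obtain ⟨x, hxB, hxlt⟩ := (csInf_lt_iff hBbdd hBne).mp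
    (show s₁ < s₁ + δ by linarith)
  have hxge : s₁ ≤ x := csInf_le hBbdd hxB
  have : dist x s₁ < δ := by
    rw [Real.dist_eq, abs_lt]; constructor <;> linarith
  exact hxB.2 (hδ this)

/-- Riccati comparison: the existence interval is bounded -/
lemma riccati {t₀ : ℝ} (h0 : 0 ≤ t₀) (ht₀b : t₀ ≤ b)
    (hGood : ∀ t, t₀ ≤ t → t ≤ b → d t < 0 ∧ 1 < ρ t) :
    b < t₀ - n * (d t₀)⁻¹ := by
  have hn' : (0:ℝ) < n := Nat.cast_pos.mpr (lt_of_lt_of_le Nat.one_pos hn)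
  have hmono : MonotoneOn (fun t => (d t)⁻¹ - t / n) (Icc t₀ b) := by
    apply monoOn_of_hasDerivAt _
      (fun t => -(-(1/(n : ℝ)) * (d t)^2 - (ρ t - 1)) / (d t)^2 - 1 / n) t₀ b
    · intro t ht
      have hmem : 0 ≤ t ∧ t ≤ b := ⟨le_trans h0 ht.1, ht.2⟩
      have hd0 : d t ≠ 0 := ne_of_lt (hGood t ht.1 ht.2).1
      exact ((hs t hmem.1 hmem.2).1.inv hd0).sub ((hasDerivAt_id t).div_const (n:ℝ))
    · intro t ht
      have hG := hGood t ht.1.le ht.2.le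
      have hd0 : d t ≠ 0 := ne_of_lt hG.1
      have hq : (0:ℝ) < (d t)^2 := by positivity
      have heq : -(-(1/(n : ℝ)) * (d t)^2 - (ρ t - 1)) / (d t)^2 - 1 / n
          = (ρ t - 1) / (d t)^2 := by
        field_simp
        ring
      rw [heq]
      have : (0:ℝ) ≤ ρ t - 1 := by linarith [hG.2]
      positivity
  have hkey := hmono ⟨le_rfl, ht₀b⟩ ⟨ht₀b, le_rfl⟩ ht₀b
  have hdb : (d b)⁻¹ < 0 := inv_neg''.mpr (hGood b ht₀b le_rfl).1
  have h6 : (d t₀)⁻¹ - t₀ / n < -(b / n) := by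
    simp only at hkey
    linarith
  have h7 := mul_lt_mul_of_pos_left h6 hn'
  have h8 : (n:ℝ) * ((d t₀)⁻¹ - t₀ / n) = n * (d t₀)⁻¹ - t₀ := by
    field_simp
  have h9 : (n:ℝ) * (-(b / n)) = -b := by field_simp
  rw [h8, h9] at h7
  linarith

end Sys

set_option maxHeartbeats 2000000 in
theorem extend_solution (n : ℕ) (hn : 1 ≤ n) (d ρ : ℝ → ℝ) (Tc : ℝ) (hTc : 0 < Tc)
    (hsol : ∀ t, 0 ≤ t → t < Tc →
      HasDerivAt d (-(1/(n : ℝ)) * (d t)^2 - (ρ t - 1)) t ∧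
      HasDerivAt ρ (-(d t) * ρ t) t ∧ 0 < ρ t)
    (K : ℝ) (hK1 : 1 ≤ K)
    (hK : ∀ t, 0 ≤ t → t < Tc → |d t| ≤ K ∧ ρ t ≤ K ∧ K⁻¹ ≤ ρ t) :
    ∃ (T' : EReal) (d₁ ρ₁ : ℝ → ℝ), (Tc : EReal) < T' ∧
      (∀ t : ℝ, 0 ≤ t → (t : EReal) < (Tc : EReal) → d₁ t = d t ∧ ρ₁ t = ρ t) ∧
      (∀ t : ℝ, 0 ≤ t → (t : EReal) < T' →
        HasDerivAt d₁ (-(1/(n : ℝ)) * (d₁ t)^2 - (ρ₁ t - 1)) t ∧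
        HasDerivAt ρ₁ (-(d₁ t) * ρ₁ t) t ∧ 0 < ρ₁ t) := by
  have hn' : (0:ℝ) < n := Nat.cast_pos.mpr (lt_of_lt_of_le Nat.one_pos hn)
  have hinvn : (1:ℝ)/n ≤ 1 := by
    rw [div_le_one hn']; exact_mod_cast hn
  have hKpos : (0:ℝ) < K := lt_of_lt_of_le one_pos hK1
  have hKinv : (0:ℝ) < K⁻¹ := by positivity
  set C₀ : ℝ := K^2 + K + 1 with hC₀
  have hC₀pos : 0 < C₀ := by positivity
  -- Lipschitz bounds for d and ρ on [0, Tc)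
  have hder_d : ∀ x ∈ Ico (0:ℝ) Tc,
      HasDerivWithinAt d (-(1/(n : ℝ)) * (d x)^2 - (ρ x - 1)) (Ico (0:ℝ) Tc) x :=
    fun x hx => ((hsol x hx.1 hx.2).1).hasDerivWithinAt
  have hbnd_d : ∀ x ∈ Ico (0:ℝ) Tc, ‖-(1/(n : ℝ)) * (d x)^2 - (ρ x - 1)‖ ≤ C₀ := by
    intro x hx
    obtain ⟨h1, h2, h3⟩ := hK x hx.1 hx.2
    have h4 : (d x)^2 ≤ K^2 := by nlinarith [abs_nonneg (d x), sq_abs (d x)]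
    have h5 : 0 < ρ x := (hsol x hx.1 hx.2).2.2
    have h6 : 0 ≤ (1/(n:ℝ)) * (d x)^2 := by positivity
    have h7 : (1/(n:ℝ)) * (d x)^2 ≤ K^2 := by nlinarith [sq_nonneg (d x)]
    rw [Real.norm_eq_abs, abs_le]
    constructor <;> nlinarith
  have hLip_d : ∀ s ∈ Ico (0:ℝ) Tc, ∀ t ∈ Ico (0:ℝ) Tc, |d s - d t| ≤ C₀ * |s - t| := by
    intro s hs t ht
    have := Convex.norm_image_sub_le_of_norm_hasDerivWithin_le hder_d hbnd_d
      (convex_Ico 0 Tc) ht hs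
    rwa [Real.norm_eq_abs, Real.norm_eq_abs] at this
  have hder_ρ : ∀ x ∈ Ico (0:ℝ) Tc,
      HasDerivWithinAt ρ (-(d x) * ρ x) (Ico (0:ℝ) Tc) x :=
    fun x hx => ((hsol x hx.1 hx.2).2.1).hasDerivWithinAt
  have hbnd_ρ : ∀ x ∈ Ico (0:ℝ) Tc, ‖-(d x) * ρ x‖ ≤ C₀ := by
    intro x hx
    obtain ⟨h1, h2, h3⟩ := hK x hx.1 hx.2
    have h5 : 0 < ρ x := (hsol x hx.1 hx.2).2.2
    rw [Real.norm_eq_abs, abs_mul, abs_neg]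
    have : |ρ x| ≤ K := by rw [abs_of_pos h5]; exact h2
    nlinarith [abs_nonneg (d x), abs_nonneg (ρ x)]
  have hLip_ρ : ∀ s ∈ Ico (0:ℝ) Tc, ∀ t ∈ Ico (0:ℝ) Tc, |ρ s - ρ t| ≤ C₀ * |s - t| := by
    intro s hs t ht
    have := Convex.norm_image_sub_le_of_norm_hasDerivWithin_le hder_ρ hbnd_ρ
      (convex_Ico 0 Tc) ht hs
    rwa [Real.norm_eq_abs, Real.norm_eq_abs] at this
  -- limits at Tc
  obtain ⟨dT, hdT⟩ := exists_tendsto_of_lip d 0 Tc C₀ hTc hC₀pos.le hLip_d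
  obtain ⟨ρT, hρT⟩ := exists_tendsto_of_lip ρ 0 Tc C₀ hTc hC₀pos.le hLip_ρ
  haveI : (nhdsWithin Tc (Set.Iio Tc)).NeBot := nhdsLT_neBot Tc
  have hevIoo : ∀ᶠ t in nhdsWithin Tc (Set.Iio Tc), (0 ≤ t ∧ t < Tc) := by
    have hmem : Ioo (max 0 (Tc - 1)) Tc ∈ nhdsWithin Tc (Set.Iio Tc) :=
      Ioo_mem_nhdsLT_of_mem ⟨by
        rcases le_or_gt Tc 1 with h | h
        · rw [max_eq_left (by linarith)]; exact hTc
        · rw [max_eq_right (by linarith)]; linarith, le_rfl⟩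
    filter_upwards [hmem] with t ht
    exact ⟨le_trans (le_max_left 0 (Tc-1)) ht.1.le, ht.2⟩
  have hρT_lb : K⁻¹ ≤ ρT := by
    apply ge_of_tendsto hρT
    filter_upwards [hevIoo] with t ht
    exact (hK t ht.1 ht.2).2.2
  -- the vector field as a map on the product
  set vf : ℝ × ℝ → ℝ × ℝ :=
    fun p => (-(1/(n : ℝ)) * p.1^2 - (p.2 - 1), -p.1 * p.2) with hvf_def
  have hvf_cd : ContDiff ℝ 1 vf := by
    apply ContDiff.prodMk
    · exact (contDiff_const.mul (contDiff_fst.pow 2)).sub (contDiff_snd.sub contDiff_const)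
    · exact (contDiff_fst.neg.mul contDiff_snd)
  set x₀ : ℝ × ℝ := (dT, ρT) with hx₀_def
  set u : ℝ → ℝ × ℝ := fun t => (d t, ρ t) with hu_def
  have htu : Tendsto u (nhdsWithin Tc (Set.Iio Tc)) (nhds x₀) := hdT.prodMk_nhds hρT
  -- Lipschitz neighborhood of x₀
  obtain ⟨L, s0, hs0mem, hlips0⟩ := (hvf_cd.contDiffAt (x := x₀)).exists_lipschitzOnWith
  obtain ⟨R₂, hR₂pos, hball⟩ := Metric.mem_nhds_iff.mp hs0mem
  set R₀ : ℝ := min (R₂/2) (K⁻¹/2) with hR₀_def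
  have hR₀pos : 0 < R₀ := lt_min (by linarith) (by positivity)
  have hR₀ball : closedBall x₀ R₀ ⊆ s0 := by
    apply Subset.trans _ hball
    apply Subset.trans (closedBall_subset_closedBall (min_le_left _ _))
    intro y hy
    rw [Metric.mem_closedBall] at hy
    rw [Metric.mem_ball]
    linarith
  have hR₀K : R₀ ≤ K⁻¹/2 := min_le_right _ _
  -- bound of vf on the closed ball
  obtain ⟨C₁, hC₁⟩ := (isCompact_closedBall x₀ R₀).exists_bound_of_continuousOn
    (hvf_cd.continuous.continuousOn)
  set C₂ : ℝ := max C₁ 0 + 1 with hC₂_def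
  have hC₂pos : 0 < C₂ := by positivity
  have hC₂bnd : ∀ y ∈ closedBall x₀ R₀, ‖vf y‖ ≤ C₂ := by
    intro y hy
    calc ‖vf y‖ ≤ C₁ := hC₁ y hy
    _ ≤ max C₁ 0 := le_max_left _ _
    _ ≤ C₂ := by rw [hC₂_def]; linarith
  -- choose ε' and the restart time t₀'
  set ε' : ℝ := min ((R₀/2) / C₂) Tc with hε'_def
  have hε'pos : 0 < ε' := lt_min (by positivity) hTc
  have hε'Tc : ε' ≤ Tc := min_le_right _ _
  have hε'C : C₂ * ε' ≤ R₀/2 := by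
    have h1 : ε' ≤ (R₀/2) / C₂ := min_le_left _ _
    calc C₂ * ε' ≤ C₂ * ((R₀/2) / C₂) := mul_le_mul_of_nonneg_left h1 hC₂pos.le
    _ = R₀/2 := by field_simp
  have hnear : ∀ᶠ t in nhdsWithin Tc (Set.Iio Tc), dist (u t) x₀ < R₀/4 :=
    Metric.tendsto_nhds.mp htu (R₀/4) (by positivity)
  obtain ⟨l, hl, hlsub⟩ := mem_nhdsLT_iff_exists_Ioo_subset.mp
    (hnear.and (eventually_mem_nhdsWithin.mono (fun x hx => hx)))
  set t₀' : ℝ := max (Tc - ε'/2) ((l + Tc)/2) with ht₀'_def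
  have hlTc : l < Tc := hl
  have ht₀'l : l < t₀' := lt_of_lt_of_le (by linarith) (le_max_right _ _)
  have ht₀'Tc : t₀' < Tc := max_lt (by linarith) (by linarith)
  have ht₀'ge : Tc - ε'/2 ≤ t₀' := le_max_left _ _
  have ht₀'0 : 0 ≤ t₀' := by
    have : Tc - ε'/2 ≥ Tc/2 := by linarith
    linarith [le_max_left (Tc - ε'/2) ((l + Tc)/2)]
  have hnear' : ∀ t, t₀' ≤ t → t < Tc → dist (u t) x₀ < R₀/4 := by
    intro t h1 h2
    exact (hlsub ⟨lt_of_lt_of_le ht₀'l h1, h2⟩).1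
  set x₀' : ℝ × ℝ := u t₀' with hx₀'_def
  have hx₀'near : dist x₀' x₀ < R₀/4 := hnear' t₀' le_rfl ht₀'Tc
  have hsubball : closedBall x₀' (R₀/2) ⊆ closedBall x₀ R₀ := by
    intro y hy
    rw [Metric.mem_closedBall] at hy ⊢
    calc dist y x₀ ≤ dist y x₀' + dist x₀' x₀ := dist_triangle _ _ _
    _ ≤ R₀/2 + R₀/4 := by linarith
    _ ≤ R₀ := by linarith
  -- the Picard–Lindelöf structure
  have hpl : IsPicardLindelof (fun _ => vf)
      (⟨t₀', ⟨by linarith, by linarith⟩⟩ : Icc (t₀' - ε') (t₀' + ε')) x₀'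
      ⟨R₀/2, by positivity⟩ 0 ⟨C₂, hC₂pos.le⟩ L :=
    { lipschitzOnWith := fun t _ => hlips0.mono (Subset.trans hsubball hR₀ball)
      continuousOn := fun x _ => continuousOn_const
      norm_le := fun t _ x hx => hC₂bnd x (hsubball hx)
      mul_max_le := by
        have : max ((t₀' + ε') - t₀') (t₀' - (t₀' - ε')) = ε' := by
          rw [show (t₀' + ε') - t₀' = ε' by ring, show t₀' - (t₀' - ε') = ε' by ring, max_self]
        show C₂ * max ((t₀' + ε') - t₀') (t₀' - (t₀' - ε')) ≤ R₀/2 - ((0:NNReal):ℝ)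
        rw [this, NNReal.coe_zero, sub_zero]
        exact hε'C }
  obtain ⟨α, hα0, hαprop⟩ := pl_exists_mem _ x₀' hpl
  have hTcmax : Tc ≤ t₀' + ε'/2 := by linarith
  have hint : ∀ t, t₀' - ε' < t → t < t₀' + ε' → HasDerivAt α (vf (α t)) t := by
    intro t h1 h2
    exact (hαprop t ⟨h1.le, h2.le⟩).1.hasDerivAt (Icc_mem_nhds h1 h2)
  -- uniqueness: u and α agree on [t₀', Tc)
  have hEq : ∀ s1, t₀' ≤ s1 → s1 < Tc → u s1 = α s1 := by
    intro s1 hs1 hs1'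
    have hsub2 : Icc t₀' s1 ⊆ Ico (0:ℝ) Tc :=
      fun x hx => ⟨le_trans ht₀'0 hx.1, lt_of_le_of_lt hx.2 hs1'⟩
    have happly := ODE_solution_unique_of_mem_Icc_right
      (v := fun _ => vf) (s := fun _ => closedBall x₀' (R₀/2)) (K := L)
      (fun t _ => hlips0.mono (Subset.trans hsubball hR₀ball))
      (f := u) (g := α) (a := t₀') (b := s1)
      ?_ ?_ ?_ ?_ ?_ ?_ ?_
    · exact happly ⟨hs1, le_rfl⟩
    · intro x hx
      have hx' := hsub2 hx
      exact (((hsol x hx'.1 hx'.2).1.continuousAt).prodMk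
        ((hsol x hx'.1 hx'.2).2.1.continuousAt)).continuousWithinAt
    · intro t ht
      have ht' := hsub2 (Ico_subset_Icc_self ht)
      exact (((hsol t ht'.1 ht'.2).1.prodMk ((hsol t ht'.1 ht'.2).2.1)).hasDerivWithinAt)
    · intro t ht
      have ht' := hsub2 (Ico_subset_Icc_self ht)
      rw [Metric.mem_closedBall]
      have h1 : dist (u t) x₀ < R₀/4 := hnear' t ht.1 ht'.2
      calc dist (u t) x₀' ≤ dist (u t) x₀ + dist x₀ x₀' := dist_triangle _ _ _
      _ ≤ R₀/4 + R₀/4 := by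
          rw [dist_comm x₀ x₀']
          linarith
      _ ≤ R₀/2 := by linarith
    · intro x hx
      apply ((hαprop x ⟨by linarith [hx.1], by linarith [hx.2, hs1', hTcmax, hε'pos]⟩).1).continuousWithinAt.mono
      intro y hy
      exact ⟨by linarith [hy.1], by linarith [hy.2, hs1', hTcmax, hε'pos]⟩
    · intro t ht
      exact (hint t (by linarith [ht.1]) (by linarith [ht.2, hs1', hTcmax, hε'pos])).hasDerivWithinAt
    · intro t ht
      exact (hαprop t ⟨by linarith [ht.1], by linarith [ht.2, hs1', hTcmax, hε'pos]⟩).2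
    · rw [hα0]
  -- gluing
  set c : ℝ := (t₀' + Tc)/2 with hc_def
  have hct₀' : t₀' < c := by rw [hc_def]; linarith
  have hcTc : c < Tc := by rw [hc_def]; linarith
  set d₁ : ℝ → ℝ := fun t => if t < c then d t else (α t).1 with hd₁_def
  set ρ₁ : ℝ → ℝ := fun t => if t < c then ρ t else (α t).2 with hρ₁_def
  refine ⟨((Tc + ε'/2 : ℝ) : EReal), d₁, ρ₁, ?_, ?_, ?_⟩
  · exact EReal.coe_lt_coe_iff.mpr (by linarith : Tc < Tc + ε'/2)
  · intro t ht0 htTc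
    have htTc' : t < Tc := EReal.coe_lt_coe_iff.mp htTc
    by_cases h : t < c
    · constructor <;> simp [hd₁_def, hρ₁_def, if_pos h]
    · push_neg at h
      have huα := hEq t (le_trans hct₀'.le h) htTc'
      constructor
      · simp only [hd₁_def, if_neg (not_lt.mpr h)]
        rw [← huα]
      · simp only [hρ₁_def, if_neg (not_lt.mpr h)]
        rw [← huα]
  · intro t ht0 htT'
    have htT'' : t < Tc + ε'/2 := EReal.coe_lt_coe_iff.mp htT'
    by_cases h : t < c
    · have htTc : t < Tc := lt_trans h hcTc
      have hev_d : d₁ =ᶠ[nhds t] d :=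
        Filter.eventually_of_mem (Iio_mem_nhds h) (fun x hx => if_pos hx)
      have hev_ρ : ρ₁ =ᶠ[nhds t] ρ :=
        Filter.eventually_of_mem (Iio_mem_nhds h) (fun x hx => if_pos hx)
      obtain ⟨hd', hρ', hρpos⟩ := hsol t ht0 htTc
      have e1 : d₁ t = d t := if_pos h
      have e2 : ρ₁ t = ρ t := if_pos h
      refine ⟨?_, ?_, ?_⟩
      · rw [e1, e2]
        exact hd'.congr_of_eventuallyEq hev_d
      · rw [e1, e2]
        exact hρ'.congr_of_eventuallyEq hev_ρ
      · rw [e2]; exact hρpos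
    · push_neg at h
      have ht1 : t₀' < t := lt_of_lt_of_le hct₀' h
      have ht2 : t < t₀' + ε' := by linarith
      have ht2' : t ≤ t₀' + ε' := ht2.le
      have hmemIcc : t ∈ Icc (t₀' - ε') (t₀' + ε') := ⟨by linarith, ht2'⟩
      have hnbhd : Ioo t₀' (t₀' + ε') ∈ nhds t := Ioo_mem_nhds ht1 ht2
      have hev_d : d₁ =ᶠ[nhds t] (fun s => (α s).1) := by
        apply Filter.eventually_of_mem hnbhd
        intro x hx
        by_cases hxc : x < c
        · have := hEq x hx.1.le (lt_trans hxc hcTc)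
          simp only [hd₁_def, if_pos hxc]
          rw [show d x = (u x).1 from rfl, this]
        · simp only [hd₁_def, if_neg hxc]
      have hev_ρ : ρ₁ =ᶠ[nhds t] (fun s => (α s).2) := by
        apply Filter.eventually_of_mem hnbhd
        intro x hx
        by_cases hxc : x < c
        · have := hEq x hx.1.le (lt_trans hxc hcTc)
          simp only [hρ₁_def, if_pos hxc]
          rw [show ρ x = (u x).2 from rfl, this]
        · simp only [hρ₁_def, if_neg hxc]
      have hαt : HasDerivAt α (vf (α t)) t := hint t (by linarith) ht2
      have hfst : HasDerivAt (fun s => (α s).1) ((vf (α t)).1) t :=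
        ((ContinuousLinearMap.fst ℝ ℝ ℝ).hasFDerivAt).comp_hasDerivAt t hαt
      have hsnd : HasDerivAt (fun s => (α s).2) ((vf (α t)).2) t :=
        ((ContinuousLinearMap.snd ℝ ℝ ℝ).hasFDerivAt).comp_hasDerivAt t hαt
      have e1 : d₁ t = (α t).1 := if_neg (not_lt.mpr h)
      have e2 : ρ₁ t = (α t).2 := if_neg (not_lt.mpr h)
      have hballmem := (hαprop t hmemIcc).2
      have hsndlb : K⁻¹/2 ≤ (α t).2 := by
        have h1 : dist (α t) x₀' ≤ R₀/2 := Metric.mem_closedBall.mp hballmem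
        have h2 : dist (α t) x₀ ≤ R₀/2 + R₀/4 := by
          calc dist (α t) x₀ ≤ dist (α t) x₀' + dist x₀' x₀ := dist_triangle _ _ _
          _ ≤ R₀/2 + R₀/4 := by linarith
        have h3 : dist ((α t).2) x₀.2 ≤ dist (α t) x₀ := by
          rw [Prod.dist_eq]
          exact le_max_right _ _
        have h4 : |(α t).2 - ρT| ≤ R₀/2 + R₀/4 := by
          rw [← Real.dist_eq]
          exact le_trans h3 h2
        have h5 := abs_le.mp h4
        have : ρT - (R₀/2 + R₀/4) ≤ (α t).2 := by linarith [h5.1]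
        have hr : R₀/2 + R₀/4 ≤ K⁻¹/2 := by linarith
        linarith
      refine ⟨?_, ?_, ?_⟩
      · rw [e1, e2]
        exact hfst.congr_of_eventuallyEq hev_d
      · rw [e1, e2]
        exact hsnd.congr_of_eventuallyEq hev_ρ
      · rw [e2]
        linarith

lemma EReal_le_of_forall (T : EReal) (B : ℝ) (hB0 : 0 ≤ B)
    (h : ∀ t : ℝ, 0 ≤ t → (t : EReal) < T → t < B) : T ≤ (B : EReal) := by
  by_contra hc
  push_neg at hc
  obtain ⟨x, hx1, hx2⟩ := EReal.lt_iff_exists_real_btwn.mp hc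
  have hxB : B < x := by exact_mod_cast hx1
  exact absurd (h x (le_of_lt (lt_of_le_of_lt hB0 hxB)) hx2) (not_lt.mpr hxB.le)

lemma EReal_toReal_pos (T : EReal) (hT0 : 0 < T) (B : ℝ) (hTB : T ≤ (B : EReal)) :
    ∃ Tc : ℝ, T = (Tc : EReal) ∧ 0 < Tc := by
  have hbot : T ≠ ⊥ := fun h => by
    rw [h] at hT0; exact absurd hT0 (not_lt.mpr bot_le)
  have htop : T ≠ ⊤ := fun h => by
    rw [h] at hTB; exact absurd hTB (not_le.mpr (EReal.coe_lt_top B))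
  refine ⟨T.toReal, (EReal.coe_toReal htop hbot).symm, ?_⟩
  have heq := EReal.coe_toReal htop hbot
  rw [← heq] at hT0
  exact_mod_cast hT0

set_option maxHeartbeats 2000000 in
/-- Blow-up of the majorant system for supercritical initial data:
a maximal solution on `[0, T)` has `T < ∞` and `d → -∞`, `ρ → +∞` as `t ↑ T`. -/
theorem majorant_blowup (n : ℕ) (hn : 1 ≤ n) (d ρ : ℝ → ℝ) (T : EReal)
    (hTpos : 0 < T)
    (hsol : ∀ t : ℝ, 0 ≤ t → (t : EReal) < T →
      HasDerivAt d (-(1/(n : ℝ)) * (d t)^2 - (ρ t - 1)) t ∧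
      HasDerivAt ρ (-(d t) * ρ t) t ∧ 0 < ρ t)
    (hmax : ∀ (T' : EReal) (d₁ ρ₁ : ℝ → ℝ), T < T' →
      ¬ ((∀ t : ℝ, 0 ≤ t → (t : EReal) < T → d₁ t = d t ∧ ρ₁ t = ρ t) ∧
        (∀ t : ℝ, 0 ≤ t → (t : EReal) < T' →
          HasDerivAt d₁ (-(1/(n : ℝ)) * (d₁ t)^2 - (ρ₁ t - 1)) t ∧
          HasDerivAt ρ₁ (-(d₁ t) * ρ₁ t) t ∧ 0 < ρ₁ t)))
    (hρ0 : 0 < ρ 0)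
    (hd0 : d 0 < Real.sign (ρ 0 - 1) * Real.sqrt (n * F n (ρ 0))) :
    T < ⊤ ∧ ∃ Tc : ℝ, T = (Tc : EReal) ∧
      Tendsto d (nhdsWithin Tc (Set.Iio Tc)) atBot ∧
      Tendsto ρ (nhdsWithin Tc (Set.Iio Tc)) atTop := by
  have hn' : (0:ℝ) < n := Nat.cast_pos.mpr (lt_of_lt_of_le Nat.one_pos hn)
  have hn0 : (n:ℝ) ≠ 0 := ne_of_gt hn'
  have hcoe : ∀ {s t : ℝ}, s ≤ t → (s : EReal) ≤ (t : EReal) :=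
    fun {s t} h => EReal.coe_le_coe_iff.mpr h
  have hsolR : ∀ b : ℝ, (b : EReal) < T → ∀ t : ℝ, 0 ≤ t → t ≤ b →
      HasDerivAt d (-(1/(n : ℝ)) * (d t)^2 - (ρ t - 1)) t ∧
      HasDerivAt ρ (-(d t) * ρ t) t ∧ 0 < ρ t :=
    fun b hb t h1 h2 => hsol t h1 (lt_of_le_of_lt (hcoe h2) hb)
  -- conservation on the whole domain
  have hcons : ∀ t : ℝ, 0 ≤ t → (t : EReal) < T → Gq n d ρ t = Gq n d ρ 0 :=
    fun t h1 h2 => Gq_conserved hn (hsolR t h2) h1 le_rfl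
  -- contradiction from an extension when T is finite and the solution is bounded
  have hExt : ∀ Tc : ℝ, 0 < Tc → T = (Tc : EReal) → ∀ K : ℝ, 1 ≤ K →
      (∀ t : ℝ, 0 ≤ t → t < Tc → |d t| ≤ K ∧ ρ t ≤ K ∧ K⁻¹ ≤ ρ t) → False := by
    intro Tc hTc hTeq K hK1 hK
    have hsolTc : ∀ t : ℝ, 0 ≤ t → t < Tc →
        HasDerivAt d (-(1/(n : ℝ)) * (d t)^2 - (ρ t - 1)) t ∧
        HasDerivAt ρ (-(d t) * ρ t) t ∧ 0 < ρ t := by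
      intro t h1 h2
      exact hsol t h1 (by rw [hTeq]; exact EReal.coe_lt_coe_iff.mpr h2)
    obtain ⟨T', d₁, ρ₁, hT', hagree, hsolve⟩ :=
      extend_solution n hn d ρ Tc hTc hsolTc K hK1 hK
    refine hmax T' d₁ ρ₁ (by rw [hTeq]; exact hT') ⟨?_, hsolve⟩
    intro t h1 h2
    exact hagree t h1 (by rw [← hTeq]; exact h2)
  have hJ1 : Jf n 1 = 0 := J_one n
  have hrpow_one : (1:ℝ) ^ (-(2:ℝ)/n) = 1 := Real.one_rpow _
  by_cases hG : ∃ t₀ : ℝ, 0 ≤ t₀ ∧ (t₀ : EReal) < T ∧ d t₀ < 0 ∧ 1 < ρ t₀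
  · -- GOOD BRANCH
    obtain ⟨t₀, ht₀0, ht₀T, hdt₀, hρt₀⟩ := hG
    have hInv : ∀ t, t₀ ≤ t → (t : EReal) < T → d t < 0 ∧ 1 < ρ t :=
      fun t h1 h2 => invariance hn (hsolR t h2) ht₀0 h1 hdt₀ hρt₀ t h1 le_rfl
    set B : ℝ := max (t₀ + 1) (t₀ - n * (d t₀)⁻¹) with hB_def
    have hB0 : 0 ≤ B := le_trans (by linarith) (le_max_left _ _)
    have hTbd : ∀ t : ℝ, 0 ≤ t → (t : EReal) < T → t < B := by
      intro t h1 h2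
      rcases le_or_gt t t₀ with h | h
      · exact lt_of_le_of_lt h (lt_of_lt_of_le (by linarith) (le_max_left _ _))
      · have hGd : ∀ s : ℝ, t₀ ≤ s → s ≤ t → d s < 0 ∧ 1 < ρ s :=
          fun s hs1 hs2 => hInv s hs1 (lt_of_le_of_lt (hcoe hs2) h2)
        have := riccati hn (hsolR t h2) ht₀0 h.le hGd
        exact lt_of_lt_of_le this (le_max_right _ _)
    have hTB := EReal_le_of_forall T B hB0 hTbd
    have hTtop : T < ⊤ := lt_of_le_of_lt hTB (EReal.coe_lt_top B)
    obtain ⟨Tc, hTeq, hTc0⟩ := EReal_toReal_pos T hTpos B hTB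
    have ht₀Tc : t₀ < Tc := by
      rw [hTeq] at ht₀T; exact_mod_cast ht₀T
    have hdomTc : ∀ t, t < Tc → (t : EReal) < T := by
      intro t h; rw [hTeq]; exact_mod_cast h
    have hsolTc : ∀ t : ℝ, 0 ≤ t → t < Tc →
        HasDerivAt d (-(1/(n : ℝ)) * (d t)^2 - (ρ t - 1)) t ∧
        HasDerivAt ρ (-(d t) * ρ t) t ∧ 0 < ρ t :=
      fun t h1 h2 => hsol t h1 (hdomTc t h2)
    have hInvTc : ∀ t, t₀ ≤ t → t < Tc → d t < 0 ∧ 1 < ρ t :=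
      fun t h1 h2 => hInv t h1 (hdomTc t h2)
    have hmono : ∀ s t : ℝ, t₀ ≤ s → s ≤ t → t < Tc → d t ≤ d s ∧ ρ s ≤ ρ t := by
      intro s t h1 h2 h3
      have hGd : ∀ x : ℝ, t₀ < x → x < t → d x < 0 ∧ 1 < ρ x :=
        fun x hx1 hx2 => hInvTc x hx1.le (lt_trans hx2 h3)
      obtain ⟨ha, hm⟩ := mono_good hn
        (fun x hx1 hx2 => hsolTc x hx1 (lt_of_le_of_lt hx2 h3)) ht₀0 le_rfl hGd
      exact ⟨ha ⟨h1, h2⟩ ⟨le_trans h1 h2, le_rfl⟩ h2,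
             hm ⟨h1, h2⟩ ⟨le_trans h1 h2, le_rfl⟩ h2⟩
    -- conservation consequences
    set G0 : ℝ := Gq n d ρ 0 with hG0_def
    have hconsTc : ∀ t : ℝ, 0 ≤ t → t < Tc → Gq n d ρ t = G0 :=
      fun t h1 h2 => hcons t h1 (hdomTc t h2)
    have hrpow_cancel : ∀ {x : ℝ}, 0 < x →
        x ^ (-(2:ℝ)/n) * x ^ ((2:ℝ)/n) = 1 := by
      intro x hx
      rw [← Real.rpow_add hx]
      have : (-(2:ℝ)/n + (2:ℝ)/n) = 0 := by ring
      rw [this, Real.rpow_zero]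
    have hsq : ∀ t : ℝ, 0 ≤ t → t < Tc →
        (d t)^2 = (G0 + 2 * Jf n (ρ t)) * (ρ t) ^ ((2:ℝ)/n) := by
      intro t h1 h2
      have hpos := (hsolTc t h1 h2).2.2
      have h := hconsTc t h1 h2
      rw [Gq] at h
      have h' : (d t)^2 * (ρ t) ^ (-(2:ℝ)/n) = G0 + 2 * Jf n (ρ t) := by linarith
      calc (d t)^2 = (d t)^2 * ((ρ t) ^ (-(2:ℝ)/n) * (ρ t) ^ ((2:ℝ)/n)) := by
            rw [hrpow_cancel hpos, mul_one]
      _ = ((d t)^2 * (ρ t) ^ (-(2:ℝ)/n)) * (ρ t) ^ ((2:ℝ)/n) := by ring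
      _ = (G0 + 2 * Jf n (ρ t)) * (ρ t) ^ ((2:ℝ)/n) := by rw [h']
    have ht₀sq := hsq t₀ ht₀0 ht₀Tc
    set c₀ : ℝ := G0 + 2 * Jf n (ρ t₀) with hc₀_def
    have hρt₀pos : 0 < ρ t₀ := (hsolTc t₀ ht₀0 ht₀Tc).2.2
    have hc₀pos : 0 < c₀ := by
      have h1 : 0 < (d t₀)^2 := pow_two_pos_of_ne_zero (ne_of_lt hdt₀)
      have h2 : 0 < (ρ t₀) ^ ((2:ℝ)/n) := Real.rpow_pos_of_pos hρt₀pos _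
      nlinarith [ht₀sq]
    have hlow : ∀ t, t₀ ≤ t → t < Tc → c₀ * (ρ t) ^ ((2:ℝ)/n) ≤ (d t)^2 := by
      intro t h1 h2
      rw [hsq t (le_trans ht₀0 h1) h2]
      apply mul_le_mul_of_nonneg_right _
        (Real.rpow_nonneg (le_of_lt (hsolTc t (le_trans ht₀0 h1) h2).2.2) _)
      have hJ : Jf n (ρ t₀) ≤ Jf n (ρ t) :=
        J_mono n hρt₀.le (hmono t₀ t le_rfl h1 h2).2
      rw [hc₀_def]; linarith
    -- d is unbounded below near Tc
    have hd_unbdd : ∀ M : ℝ, 0 ≤ M → ∃ s : ℝ, t₀ ≤ s ∧ s < Tc ∧ d s < -M := by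
      intro M hM
      by_contra hcon
      push_neg at hcon
      set M₁ : ℝ := max M (|d t₀|) with hM₁_def
      have hM₁0 : 0 ≤ M₁ := le_trans hM (le_max_left _ _)
      have hdb : ∀ t, t₀ ≤ t → t < Tc → |d t| ≤ M₁ := by
        intro t h1 h2
        rw [abs_le]
        constructor
        · have := hcon t h1 h2
          have : -M ≤ d t := by linarith
          have hMM : M ≤ M₁ := le_max_left _ _
          linarith
        · have h3 : d t ≤ d t₀ := (hmono t₀ t le_rfl h1 h2).1
          have : d t₀ ≤ |d t₀| := le_abs_self _
          have : |d t₀| ≤ M₁ := le_max_right _ _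
          linarith
      set Q : ℝ := (M₁^2 + 1)/c₀ with hQ_def
      have hQpos : 0 < Q := by positivity
      have hρbd : ∀ t, t₀ ≤ t → t < Tc → ρ t ≤ Q ^ ((n:ℝ)/2) := by
        intro t h1 h2
        have hρpos : 0 < ρ t := (hsolTc t (le_trans ht₀0 h1) h2).2.2
        have h3 := hlow t h1 h2
        have h4 : (d t)^2 ≤ M₁^2 := by
          have := hdb t h1 h2
          nlinarith [abs_nonneg (d t), sq_abs (d t)]
        have h5 : (ρ t) ^ ((2:ℝ)/n) ≤ Q := by
          rw [hQ_def, le_div_iff₀ hc₀pos]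
          nlinarith
        have h6 : ((ρ t) ^ ((2:ℝ)/n)) ^ ((n:ℝ)/2) ≤ Q ^ ((n:ℝ)/2) :=
          Real.rpow_le_rpow (Real.rpow_nonneg hρpos.le _) h5 (by positivity)
        have h7 : ((ρ t) ^ ((2:ℝ)/n)) ^ ((n:ℝ)/2) = ρ t := by
          rw [← Real.rpow_mul hρpos.le]
          have : (2:ℝ)/n * ((n:ℝ)/2) = 1 := by field_simp
          rw [this, Real.rpow_one]
        rwa [h7] at h6
      -- bounds on the compact piece [0, t₀]
      have hcont_d : ContinuousOn d (Icc 0 t₀) := fun x hx =>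
        ((hsolTc x hx.1 (lt_of_le_of_lt hx.2 ht₀Tc)).1.continuousAt).continuousWithinAt
      have hcont_ρ : ContinuousOn ρ (Icc 0 t₀) := fun x hx =>
        ((hsolTc x hx.1 (lt_of_le_of_lt hx.2 ht₀Tc)).2.1.continuousAt).continuousWithinAt
      obtain ⟨Md, hMd⟩ := isCompact_Icc.exists_bound_of_continuousOn hcont_d
      obtain ⟨Mρ, hMρ⟩ := isCompact_Icc.exists_bound_of_continuousOn hcont_ρ
      have hIccne : (Icc (0:ℝ) t₀).Nonempty := nonempty_Icc.mpr ht₀0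
      obtain ⟨z, hz_mem, hz_min⟩ := isCompact_Icc.exists_isMinOn hIccne hcont_ρ
      set m : ℝ := ρ z with hm_def
      have hmpos : 0 < m := (hsolTc z hz_mem.1 (lt_of_le_of_lt hz_mem.2 ht₀Tc)).2.2
      have hMd0 : 0 ≤ Md := le_trans (norm_nonneg _) (hMd 0 ⟨le_rfl, ht₀0⟩)
      have hMρ0 : 0 ≤ Mρ := le_trans (norm_nonneg _) (hMρ 0 ⟨le_rfl, ht₀0⟩)
      set K : ℝ := max (M₁ + Md + Mρ + Q ^ ((n:ℝ)/2) + 1) (m⁻¹ + 1) with hK_def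
      have hQn : 0 ≤ Q ^ ((n:ℝ)/2) := Real.rpow_nonneg hQpos.le _
      have hK1 : 1 ≤ K := le_trans (by linarith) (le_max_left _ _)
      have hKmax1 : M₁ + Md + Mρ + Q ^ ((n:ℝ)/2) + 1 ≤ K := le_max_left _ _
      have hKmax2 : m⁻¹ + 1 ≤ K := le_max_right _ _
      have hKinvm : K⁻¹ ≤ m := by
        have hKpos : 0 < K := lt_of_lt_of_le one_pos hK1
        have h1 : m⁻¹ ≤ K := by linarith
        calc K⁻¹ ≤ (m⁻¹)⁻¹ := by
              apply inv_anti₀ (by positivity) h1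
        _ = m := inv_inv m
      apply hExt Tc hTc0 hTeq K hK1
      intro t h1 h2
      rcases le_or_gt t t₀ with h | h
      · have hd1 : ‖d t‖ ≤ Md := hMd t ⟨h1, h⟩
        have hρ1 : ‖ρ t‖ ≤ Mρ := hMρ t ⟨h1, h⟩
        have hρpos : 0 < ρ t := (hsolTc t h1 h2).2.2
        refine ⟨?_, ?_, ?_⟩
        · rw [← Real.norm_eq_abs]; linarith
        · rw [Real.norm_eq_abs, abs_of_pos hρpos] at hρ1; linarith
        · exact le_trans hKinvm (hz_min ⟨h1, h⟩)
      · refine ⟨?_, ?_, ?_⟩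
        · have := hdb t h.le h2; linarith
        · have := hρbd t h.le h2; linarith
        · have hρ1 := (hInvTc t h.le h2).2
          have hKpos : 0 < K := lt_of_lt_of_le one_pos hK1
          have : K⁻¹ ≤ 1 := by
            rw [inv_le_one_iff₀]; right; exact hK1
          linarith
    -- tendsto atBot for d
    haveI : (nhdsWithin Tc (Set.Iio Tc)).NeBot := nhdsLT_neBot Tc
    have htendd : Tendsto d (nhdsWithin Tc (Set.Iio Tc)) atBot := by
      rw [Filter.tendsto_atBot]
      intro b
      obtain ⟨s, hs1, hs2, hs3⟩ := hd_unbdd (|b|) (abs_nonneg b)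
      have hsb : d s ≤ b := by
        have := neg_abs_le b; linarith
      filter_upwards [Ioo_mem_nhdsLT_of_mem (⟨hs2, le_rfl⟩ : Tc ∈ Ioc s Tc)] with t ht
      exact le_trans (hmono s t hs1 ht.1.le ht.2).1 hsb
    -- ρ is unbounded above near Tc
    have hρ_unbdd : ∀ Kb : ℝ, 1 ≤ Kb → ∃ s : ℝ, t₀ ≤ s ∧ s < Tc ∧ Kb < ρ s := by
      intro Kb hKb
      by_contra hcon
      push_neg at hcon
      set A : ℝ := |G0| + 2 * Jf n Kb with hA_def
      set Bd : ℝ := Kb ^ ((2:ℝ)/n) with hBd_def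
      have hJKb : 0 ≤ Jf n Kb := J_nonneg n (lt_of_lt_of_le one_pos hKb)
      have hA0 : 0 ≤ A := by have := abs_nonneg G0; rw [hA_def]; linarith
      have hBd0 : 0 < Bd := Real.rpow_pos_of_pos (lt_of_lt_of_le one_pos hKb) _
      have hABnn : 0 ≤ A * Bd := mul_nonneg hA0 hBd0.le
      obtain ⟨s, hs1, hs2, hs3⟩ := hd_unbdd (Real.sqrt (A * Bd)) (Real.sqrt_nonneg _)
      have hρs_pos : 0 < ρ s := (hsolTc s (le_trans ht₀0 hs1) hs2).2.2
      have hρs1 : 1 < ρ s := (hInvTc s hs1 hs2).2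
      have h4 : (d s)^2 ≤ A * Bd := by
        rw [hsq s (le_trans ht₀0 hs1) hs2]
        have h5 : G0 + 2 * Jf n (ρ s) ≤ A := by
          have hJs : Jf n (ρ s) ≤ Jf n Kb := J_mono n hρs1.le (hcon s hs1 hs2)
          have := le_abs_self G0
          rw [hA_def]; linarith
        have h6 : (ρ s) ^ ((2:ℝ)/n) ≤ Bd := by
          rw [hBd_def]
          exact Real.rpow_le_rpow hρs_pos.le (hcon s hs1 hs2) (by positivity)
        have h7 : 0 ≤ G0 + 2 * Jf n (ρ s) := by
          have h8 := hsq s (le_trans ht₀0 hs1) hs2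
          have h9 : 0 < (ρ s) ^ ((2:ℝ)/n) := Real.rpow_pos_of_pos hρs_pos _
          nlinarith [sq_nonneg (d s)]
        have h10 : 0 ≤ (ρ s) ^ ((2:ℝ)/n) := Real.rpow_nonneg hρs_pos.le _
        exact mul_le_mul h5 h6 h10 hA0
      have h11 : Real.sqrt (A * Bd) ^ 2 = A * Bd := Real.sq_sqrt hABnn
      nlinarith [Real.sqrt_nonneg (A * Bd)]
    have htendρ : Tendsto ρ (nhdsWithin Tc (Set.Iio Tc)) atTop := by
      rw [Filter.tendsto_atTop]
      intro b
      obtain ⟨s, hs1, hs2, hs3⟩ := hρ_unbdd (max b 1) (le_max_right _ _)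
      filter_upwards [Ioo_mem_nhdsLT_of_mem (⟨hs2, le_rfl⟩ : Tc ∈ Ioc s Tc)] with t ht
      have := (hmono s t hs1 ht.1.le ht.2).2
      have hb : b ≤ max b 1 := le_max_left _ _
      linarith
    exact ⟨hTtop, Tc, hTeq, htendd, htendρ⟩
  · -- NO-GOOD BRANCH: derive a contradiction
    exfalso
    push_neg at hG
    obtain ⟨hsold0, hsolρ0, _⟩ := hsol 0 le_rfl hTpos
    rcases lt_trichotomy (ρ 0) 1 with hρlt | hρeq | hρgt
    · -- ρ 0 < 1
      have hsign : Real.sign (ρ 0 - 1) = -1 := Real.sign_of_neg (by linarith)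
      rw [hsign] at hd0
      have hd0neg : d 0 < 0 := by
        have h := Real.sqrt_nonneg ((n:ℝ) * F n (ρ 0))
        nlinarith
      have hFJ : (n:ℝ) * F n (ρ 0) = 2 * (ρ 0) ^ ((2:ℝ)/n) * Jf n (ρ 0) := by
        rw [F_eq_J]; field_simp
      have hXnn : 0 ≤ (n:ℝ) * F n (ρ 0) := by
        rw [hFJ]
        have := J_nonneg n hρ0
        have := Real.rpow_nonneg hρ0.le ((2:ℝ)/n)
        positivity
      have hd0sq : (n:ℝ) * F n (ρ 0) < (d 0)^2 := by
        have h1 : Real.sqrt ((n:ℝ) * F n (ρ 0)) < -(d 0) := by linarith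
        have h2 : (Real.sqrt ((n:ℝ) * F n (ρ 0)))^2 < (-(d 0))^2 := by
          have := Real.sqrt_nonneg ((n:ℝ) * F n (ρ 0))
          nlinarith
        have h3 := Real.sq_sqrt hXnn
        nlinarith
      have hrpow_cancel : (ρ 0) ^ ((2:ℝ)/n) * (ρ 0) ^ (-(2:ℝ)/n) = 1 := by
        rw [← Real.rpow_add hρ0]
        have : ((2:ℝ)/n + -(2:ℝ)/n) = 0 := by ring
        rw [this, Real.rpow_zero]
      have hG0pos : 0 < Gq n d ρ 0 := by
        rw [Gq]
        have h1 : 2 * (ρ 0) ^ ((2:ℝ)/n) * Jf n (ρ 0) < (d 0)^2 := by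
          rw [← hFJ]; exact hd0sq
        have h2 : 0 < (ρ 0) ^ (-(2:ℝ)/n) := Real.rpow_pos_of_pos hρ0 _
        have h3 : (2 * (ρ 0) ^ ((2:ℝ)/n) * Jf n (ρ 0)) * (ρ 0) ^ (-(2:ℝ)/n)
            = 2 * Jf n (ρ 0) := by
          rw [show (2 * (ρ 0) ^ ((2:ℝ)/n) * Jf n (ρ 0)) * (ρ 0) ^ (-(2:ℝ)/n)
            = 2 * Jf n (ρ 0) * ((ρ 0) ^ ((2:ℝ)/n) * (ρ 0) ^ (-(2:ℝ)/n)) from by ring,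
            hrpow_cancel, mul_one]
        have h4 := mul_lt_mul_of_pos_right h1 h2
        rw [h3] at h4
        linarith
      have hdneg : ∀ t : ℝ, 0 ≤ t → (t : EReal) < T → d t < 0 := by
        intro t h1 h2
        have hne : ∀ s : ℝ, 0 ≤ s → (s : EReal) < T → d s ≠ 0 := by
          intro s hs1 hs2 heq
          have hc := hcons s hs1 hs2
          rw [Gq, heq] at hc
          have hJs := J_nonneg n (hsol s hs1 hs2).2.2
          nlinarith
        by_contra hge
        push_neg at hge
        have hgt : 0 < d t := lt_of_le_of_ne hge (Ne.symm (hne t h1 h2))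
        have hcont : ContinuousOn d (Icc 0 t) := fun x hx =>
          ((hsolR t h2 x hx.1 hx.2).1.continuousAt).continuousWithinAt
        have hIVT := intermediate_value_Icc h1 hcont
        have h0mem : (0:ℝ) ∈ Icc (d 0) (d t) := ⟨hd0neg.le, hgt.le⟩
        obtain ⟨s, hs_mem, hs_eq⟩ := hIVT h0mem
        exact hne s hs_mem.1 (lt_of_le_of_lt (hcoe hs_mem.2) h2) hs_eq
      have hρle1 : ∀ t : ℝ, 0 ≤ t → (t : EReal) < T → ρ t ≤ 1 :=
        fun t h1 h2 => hG t h1 h2 (hdneg t h1 h2)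
      have hρmono : ∀ t : ℝ, 0 ≤ t → (t : EReal) < T → ρ 0 ≤ ρ t := by
        intro t h1 h2
        have hm : MonotoneOn ρ (Icc 0 t) := by
          apply monoOn_of_hasDerivAt ρ (fun s => -(d s) * ρ s) 0 t
          · intro s hs; exact (hsolR t h2 s hs.1 hs.2).2.1
          · intro s hs
            have hd := hdneg s hs.1.le (lt_of_le_of_lt (hcoe hs.2.le) h2)
            have hρ := (hsolR t h2 s hs.1.le hs.2.le).2.2
            nlinarith
        exact hm ⟨le_rfl, h1⟩ ⟨h1, le_rfl⟩ h1
      set c : ℝ := Real.sqrt (Gq n d ρ 0 * (ρ 0) ^ ((2:ℝ)/n)) with hc_def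
      have hcsq : c^2 = Gq n d ρ 0 * (ρ 0) ^ ((2:ℝ)/n) := by
        rw [hc_def]
        exact Real.sq_sqrt (by positivity)
      have hcpos : 0 < c := by
        rw [hc_def]
        apply Real.sqrt_pos.mpr
        have : 0 < (ρ 0) ^ ((2:ℝ)/n) := Real.rpow_pos_of_pos hρ0 _
        positivity
      have hsqt : ∀ t : ℝ, 0 ≤ t → (t : EReal) < T →
          (d t)^2 = (Gq n d ρ 0 + 2 * Jf n (ρ t)) * (ρ t) ^ ((2:ℝ)/n) := by
        intro t h1 h2
        have hpos := (hsol t h1 h2).2.2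
        have h := hcons t h1 h2
        rw [Gq] at h
        have hcan : (ρ t) ^ (-(2:ℝ)/n) * (ρ t) ^ ((2:ℝ)/n) = 1 := by
          rw [← Real.rpow_add hpos]
          have : (-(2:ℝ)/n + (2:ℝ)/n) = 0 := by ring
          rw [this, Real.rpow_zero]
        have h' : (d t)^2 * (ρ t) ^ (-(2:ℝ)/n) = Gq n d ρ 0 + 2 * Jf n (ρ t) := by
          linarith
        calc (d t)^2 = (d t)^2 * ((ρ t) ^ (-(2:ℝ)/n) * (ρ t) ^ ((2:ℝ)/n)) := by
              rw [hcan, mul_one]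
        _ = ((d t)^2 * (ρ t) ^ (-(2:ℝ)/n)) * (ρ t) ^ ((2:ℝ)/n) := by ring
        _ = (Gq n d ρ 0 + 2 * Jf n (ρ t)) * (ρ t) ^ ((2:ℝ)/n) := by rw [h']
      have hcd : ∀ t : ℝ, 0 ≤ t → (t : EReal) < T → c ≤ -(d t) := by
        intro t h1 h2
        have hpos := (hsol t h1 h2).2.2
        have h3 := hsqt t h1 h2
        have hJt := J_nonneg n hpos
        have h4 : (ρ 0) ^ ((2:ℝ)/n) ≤ (ρ t) ^ ((2:ℝ)/n) :=
          Real.rpow_le_rpow hρ0.le (hρmono t h1 h2) (by positivity)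
        have h5 : c^2 ≤ (d t)^2 := by
          rw [hcsq, h3]
          have h6 : 0 < (ρ 0) ^ ((2:ℝ)/n) := Real.rpow_pos_of_pos hρ0 _
          nlinarith
        have h7 : Real.sqrt (c^2) ≤ Real.sqrt ((d t)^2) := Real.sqrt_le_sqrt h5
        rw [Real.sqrt_sq_eq_abs, Real.sqrt_sq_eq_abs, abs_of_pos hcpos,
          abs_of_neg (hdneg t h1 h2)] at h7
        exact h7
      set B : ℝ := (1 - ρ 0)/(c * ρ 0) + 1 with hB_def
      have hcρpos : 0 < c * ρ 0 := by positivity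
      have hB0 : 0 ≤ B := by
        have h0 : (0:ℝ) ≤ 1 - ρ 0 := by linarith
        have h1 : 0 ≤ (1 - ρ 0)/(c * ρ 0) := div_nonneg h0 hcρpos.le
        rw [hB_def]; linarith
      have hTbd : ∀ t : ℝ, 0 ≤ t → (t : EReal) < T → t < B := by
        intro t h1 h2
        have hm : MonotoneOn (fun s => ρ s - c * ρ 0 * s) (Icc 0 t) := by
          apply monoOn_of_hasDerivAt _ (fun s => -(d s) * ρ s - c * ρ 0 * 1) 0 t
          · intro s hs
            exact ((hsolR t h2 s hs.1 hs.2).2.1).sub ((hasDerivAt_id s).const_mul (c * ρ 0))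
          · intro s hs
            have hsT : (s : EReal) < T := lt_of_le_of_lt (hcoe hs.2.le) h2
            have hρs := (hsol s hs.1.le hsT).2.2
            have hρs0 := hρmono s hs.1.le hsT
            have hcds := hcd s hs.1.le hsT
            have : c * ρ s ≤ -(d s) * ρ s := by nlinarith
            nlinarith
        have h3 := hm ⟨le_rfl, h1⟩ ⟨h1, le_rfl⟩ h1
        simp only at h3
        have h4 : ρ 0 + c * ρ 0 * t ≤ ρ t := by linarith
        have h5 := hρle1 t h1 h2
        have h6 : c * ρ 0 * t ≤ 1 - ρ 0 := by linarith
        have h7 : t ≤ (1 - ρ 0)/(c * ρ 0) := by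
          rw [le_div_iff₀ hcρpos]; linarith
        rw [hB_def]; linarith
      have hTB := EReal_le_of_forall T B hB0 hTbd
      obtain ⟨Tc, hTeq, hTc0⟩ := EReal_toReal_pos T hTpos B hTB
      have hdomTc : ∀ t, t < Tc → (t : EReal) < T := by
        intro t h; rw [hTeq]; exact_mod_cast h
      set Q3 : ℝ := Gq n d ρ 0 + 2 * Jf n (ρ 0) with hQ3_def
      have hQ3pos : 0 < Q3 := by
        have := J_nonneg n hρ0
        rw [hQ3_def]; linarith
      have hdbd : ∀ t : ℝ, 0 ≤ t → (t : EReal) < T → |d t| ≤ Real.sqrt Q3 := by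
        intro t h1 h2
        have hpos := (hsol t h1 h2).2.2
        have h3 := hsqt t h1 h2
        have hJle : Jf n (ρ t) ≤ Jf n (ρ 0) :=
          J_anti n hρ0 (hρmono t h1 h2) (hρle1 t h1 h2)
        have hrle : (ρ t) ^ ((2:ℝ)/n) ≤ 1 :=
          Real.rpow_le_one hpos.le (hρle1 t h1 h2) (by positivity)
        have hnn : 0 ≤ Gq n d ρ 0 + 2 * Jf n (ρ t) := by
          have := J_nonneg n hpos; linarith
        have h4 : (d t)^2 ≤ Q3 := by
          rw [h3, hQ3_def]
          nlinarith
        have h5 : Real.sqrt ((d t)^2) ≤ Real.sqrt Q3 := Real.sqrt_le_sqrt h4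
        rwa [Real.sqrt_sq_eq_abs] at h5
      set K : ℝ := max ((ρ 0)⁻¹ + 1) (Real.sqrt Q3 + 1) with hK_def
      have hρ0inv : 1 < (ρ 0)⁻¹ := by
        have h1 : ρ 0 * (ρ 0)⁻¹ = 1 := mul_inv_cancel₀ (ne_of_gt hρ0)
        have h2 : 0 < (ρ 0)⁻¹ := inv_pos.mpr hρ0
        nlinarith
      have hK1 : 1 ≤ K := le_trans (by linarith) (le_max_left _ _)
      apply hExt Tc hTc0 hTeq K hK1
      intro t h1 h2
      have h2' := hdomTc t h2
      refine ⟨?_, ?_, ?_⟩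
      · have := hdbd t h1 h2'
        have : Real.sqrt Q3 + 1 ≤ K := le_max_right _ _
        have := hdbd t h1 h2'
        linarith [le_max_right ((ρ 0)⁻¹ + 1) (Real.sqrt Q3 + 1), hdbd t h1 h2']
      · have := hρle1 t h1 h2'
        linarith
      · have hKinv : K⁻¹ ≤ ρ 0 := by
          have hKpos : 0 < K := lt_of_lt_of_le one_pos hK1
          have h3 : (ρ 0)⁻¹ ≤ K := le_trans (by linarith) (le_max_left _ _)
          calc K⁻¹ ≤ ((ρ 0)⁻¹)⁻¹ := inv_anti₀ (by positivity) h3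
          _ = ρ 0 := inv_inv _
        linarith [hρmono t h1 h2']
    · -- ρ 0 = 1
      have hsign : Real.sign (ρ 0 - 1) = 0 := by
        rw [hρeq, sub_self, Real.sign_zero]
      rw [hsign, zero_mul] at hd0
      obtain ⟨τ, hτ1, hτ2⟩ := EReal.lt_iff_exists_real_btwn.mp hTpos
      have hτpos : 0 < τ := by exact_mod_cast hτ1
      haveI : (nhdsWithin (0:ℝ) (Set.Ioi 0)).NeBot := nhdsGT_neBot 0
      have hslope := hasDerivAt_iff_tendsto_slope.mp hsolρ0
      have hder_pos : 0 < -(d 0) * ρ 0 := by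
        rw [hρeq]; nlinarith
      have hev0 : ∀ᶠ x in nhdsWithin (0:ℝ) {0}ᶜ, 0 < slope ρ 0 x :=
        hslope.eventually (eventually_gt_nhds hder_pos)
      have hev1 : ∀ᶠ x in nhdsWithin (0:ℝ) (Set.Ioi 0), 0 < slope ρ 0 x :=
        hev0.filter_mono (nhdsWithin_mono 0 (fun x hx => ne_of_gt hx))
      have hev2 : ∀ᶠ x in nhdsWithin (0:ℝ) (Set.Ioi 0), d x < 0 :=
        (hsold0.continuousAt.eventually (eventually_lt_nhds hd0)).filter_mono
          nhdsWithin_le_nhds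
      have hev3 : Set.Ioo (0:ℝ) τ ∈ nhdsWithin (0:ℝ) (Set.Ioi 0) :=
        Ioo_mem_nhdsGT_of_mem ⟨le_rfl, hτpos⟩
      obtain ⟨t, ⟨hts, htd⟩, htmem⟩ :=
        ((hev1.and hev2).and (eventually_of_mem hev3 (fun x hx => hx))).exists
      have ht0 : 0 < t := htmem.1
      have htT : (t : EReal) < T :=
        lt_trans (EReal.coe_lt_coe_iff.mpr htmem.2) hτ2
      have hρt : 1 < ρ t := by
        rw [slope_def_field] at hts
        have h4 : 0 < (ρ t - ρ 0) / (t - 0) := hts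
        rcases div_pos_iff.mp h4 with ⟨h5, _⟩ | ⟨_, h6⟩
        · rw [hρeq] at h5; linarith
        · linarith
      exact absurd (hG t ht0.le htT htd) (not_le.mpr hρt)
    · -- ρ 0 > 1
      have hsign : Real.sign (ρ 0 - 1) = 1 := Real.sign_of_pos (by linarith)
      rw [hsign, one_mul] at hd0
      rcases lt_or_ge (d 0) 0 with hd0neg | hd0nn
      · exact absurd (hG 0 le_rfl hTpos hd0neg) (not_le.mpr hρgt)
      · have hXnn : 0 ≤ (n:ℝ) * F n (ρ 0) := by
          by_contra hneg
          push_neg at hneg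
          rw [Real.sqrt_eq_zero_of_nonpos hneg.le] at hd0
          linarith
        have hd0sq : (d 0)^2 < (n:ℝ) * F n (ρ 0) := by
          have h2 : (d 0)^2 < (Real.sqrt ((n:ℝ) * F n (ρ 0)))^2 := by
            have := Real.sqrt_nonneg ((n:ℝ) * F n (ρ 0))
            nlinarith
          have h3 := Real.sq_sqrt hXnn
          nlinarith
        have hFJ : (n:ℝ) * F n (ρ 0) = 2 * (ρ 0) ^ ((2:ℝ)/n) * Jf n (ρ 0) := by
          rw [F_eq_J]; field_simp
        have hG0neg : Gq n d ρ 0 < 0 := by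
          rw [Gq]
          have h1 : (d 0)^2 < 2 * (ρ 0) ^ ((2:ℝ)/n) * Jf n (ρ 0) := by
            rw [← hFJ]; exact hd0sq
          have h2 : 0 < (ρ 0) ^ (-(2:ℝ)/n) := Real.rpow_pos_of_pos hρ0 _
          have hcan : (ρ 0) ^ ((2:ℝ)/n) * (ρ 0) ^ (-(2:ℝ)/n) = 1 := by
            rw [← Real.rpow_add hρ0]
            have : ((2:ℝ)/n + -(2:ℝ)/n) = 0 := by ring
            rw [this, Real.rpow_zero]
          have h3 : (2 * (ρ 0) ^ ((2:ℝ)/n) * Jf n (ρ 0)) * (ρ 0) ^ (-(2:ℝ)/n)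
              = 2 * Jf n (ρ 0) := by
            rw [show (2 * (ρ 0) ^ ((2:ℝ)/n) * Jf n (ρ 0)) * (ρ 0) ^ (-(2:ℝ)/n)
              = 2 * Jf n (ρ 0) * ((ρ 0) ^ ((2:ℝ)/n) * (ρ 0) ^ (-(2:ℝ)/n)) from by ring,
              hcan, mul_one]
          have h4 := mul_lt_mul_of_pos_right h1 h2
          rw [h3] at h4
          linarith
        have hρgt1 : ∀ t : ℝ, 0 ≤ t → (t : EReal) < T → 1 < ρ t := by
          intro t h1 h2
          have hne1 : ∀ s : ℝ, 0 ≤ s → (s : EReal) < T → ρ s ≠ 1 := by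
            intro s hs1 hs2 heq
            have hc := hcons s hs1 hs2
            rw [Gq, heq, hrpow_one, hJ1] at hc
            nlinarith [sq_nonneg (d s)]
          by_contra hle
          push_neg at hle
          have hlt : ρ t < 1 := lt_of_le_of_ne hle (hne1 t h1 h2)
          have hcont : ContinuousOn ρ (Icc 0 t) := fun x hx =>
            ((hsolR t h2 x hx.1 hx.2).2.1.continuousAt).continuousWithinAt
          have hIVT := intermediate_value_Icc' h1 hcont
          have h1mem : (1:ℝ) ∈ Icc (ρ t) (ρ 0) := ⟨hlt.le, hρgt.le⟩
          obtain ⟨s, hs_mem, hs_eq⟩ := hIVT h1mem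
          exact hne1 s hs_mem.1 (lt_of_le_of_lt (hcoe hs_mem.2) h2) hs_eq
        have hdnn : ∀ t : ℝ, 0 ≤ t → (t : EReal) < T → 0 ≤ d t := by
          intro t h1 h2
          by_contra hlt
          push_neg at hlt
          exact absurd (hG t h1 h2 hlt) (not_le.mpr (hρgt1 t h1 h2))
        have hJc : ContinuousAt (Jf n) 1 := (hasDerivAt_J n one_pos).continuousAt
        set ε : ℝ := -(Gq n d ρ 0)/4 with hε_def
        have hεpos : 0 < ε := by rw [hε_def]; linarith
        obtain ⟨δ, hδpos, hδ⟩ := Metric.continuousAt_iff.mp hJc ε hεpos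
        have hρδ : ∀ t : ℝ, 0 ≤ t → (t : EReal) < T → 1 + δ ≤ ρ t := by
          intro t h1 h2
          by_contra hlt
          push_neg at hlt
          have hgt1 := hρgt1 t h1 h2
          have hdist : dist (ρ t) 1 < δ := by
            rw [Real.dist_eq, abs_lt]
            constructor <;> linarith
          have hJsmall := hδ hdist
          rw [hJ1, dist_zero_right, Real.norm_eq_abs] at hJsmall
          have hc := hcons t h1 h2
          rw [Gq] at hc
          have hpos := (hsol t h1 h2).2.2
          have h3 : 0 ≤ (d t)^2 * (ρ t) ^ (-(2:ℝ)/n) := by positivity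
          have h4 : 2 * Jf n (ρ t) ≥ -(Gq n d ρ 0) := by linarith
          have h5 : Jf n (ρ t) ≤ |Jf n (ρ t)| := le_abs_self _
          rw [hε_def] at hJsmall
          linarith [abs_le.mp hJsmall.le]
        set B : ℝ := d 0 / δ + 1 with hB_def
        have hB0 : 0 ≤ B := by
          have h1 : 0 ≤ d 0 / δ := div_nonneg hd0nn hδpos.le
          rw [hB_def]; linarith
        have hTbd : ∀ t : ℝ, 0 ≤ t → (t : EReal) < T → t < B := by
          intro t h1 h2
          by_contra hge
          push_neg at hge
          have hanti : AntitoneOn (fun s => d s + δ * s) (Icc 0 t) := by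
            apply antiOn_of_hasDerivAt _
              (fun s => -(1/(n : ℝ)) * (d s)^2 - (ρ s - 1) + δ * 1) 0 t
            · intro s hs
              exact ((hsolR t h2 s hs.1 hs.2).1).add ((hasDerivAt_id s).const_mul δ)
            · intro s hs
              have hsT : (s : EReal) < T := lt_of_le_of_lt (hcoe hs.2.le) h2
              have hρs := hρδ s hs.1.le hsT
              have hsq : 0 ≤ (1/(n : ℝ)) * (d s)^2 := by positivity
              nlinarith
          have h3 := hanti ⟨le_rfl, h1⟩ ⟨h1, le_rfl⟩ h1
          simp only at h3
          have h4 : d t ≤ d 0 - δ * t := by linarith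
          have h5 : d 0 ≤ δ * (d 0 / δ) := by
            rw [mul_div_cancel₀ _ (ne_of_gt hδpos)]
          have h6 : δ * t ≥ δ * (d 0/δ + 1) := mul_le_mul_of_nonneg_left hge hδpos.le
          have h7 := hdnn t h1 h2
          nlinarith
        have hTB := EReal_le_of_forall T B hB0 hTbd
        obtain ⟨Tc, hTeq, hTc0⟩ := EReal_toReal_pos T hTpos B hTB
        have hdomTc : ∀ t, t < Tc → (t : EReal) < T := by
          intro t h; rw [hTeq]; exact_mod_cast h
        -- d and ρ are antitone, bounded by initial data
        have hdle : ∀ t : ℝ, 0 ≤ t → (t : EReal) < T → d t ≤ d 0 := by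
          intro t h1 h2
          have hanti : AntitoneOn d (Icc 0 t) := by
            apply antiOn_of_hasDerivAt d
              (fun s => -(1/(n : ℝ)) * (d s)^2 - (ρ s - 1)) 0 t
            · intro s hs; exact (hsolR t h2 s hs.1 hs.2).1
            · intro s hs
              have hsT : (s : EReal) < T := lt_of_le_of_lt (hcoe hs.2.le) h2
              have hρs := hρgt1 s hs.1.le hsT
              have hsq : 0 ≤ (1/(n : ℝ)) * (d s)^2 := by positivity
              nlinarith
          exact hanti ⟨le_rfl, h1⟩ ⟨h1, le_rfl⟩ h1
        have hρle : ∀ t : ℝ, 0 ≤ t → (t : EReal) < T → ρ t ≤ ρ 0 := by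
          intro t h1 h2
          have hanti : AntitoneOn ρ (Icc 0 t) := by
            apply antiOn_of_hasDerivAt ρ (fun s => -(d s) * ρ s) 0 t
            · intro s hs; exact (hsolR t h2 s hs.1 hs.2).2.1
            · intro s hs
              have hsT : (s : EReal) < T := lt_of_le_of_lt (hcoe hs.2.le) h2
              have hds := hdnn s hs.1.le hsT
              have hρs := (hsol s hs.1.le hsT).2.2
              nlinarith
          exact hanti ⟨le_rfl, h1⟩ ⟨h1, le_rfl⟩ h1
        set K : ℝ := d 0 + ρ 0 + 1 with hK_def
        have hK1 : 1 ≤ K := by rw [hK_def]; linarith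
        apply hExt Tc hTc0 hTeq K hK1
        intro t h1 h2
        have h2' := hdomTc t h2
        refine ⟨?_, ?_, ?_⟩
        · rw [abs_le]
          constructor
          · have := hdnn t h1 h2'; rw [hK_def]; linarith
          · have := hdle t h1 h2'; rw [hK_def]; linarith
        · have := hρle t h1 h2'; rw [hK_def]; linarith
        · have hKpos : 0 < K := lt_of_lt_of_le one_pos hK1
          have hKinv : K⁻¹ ≤ 1 := by
            rw [inv_le_one_iff₀]; right; exact hK1
          have := hρgt1 t h1 h2'
          linarith
end
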